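/- arXiv:1910.12150 — 3 statements merged into one kernel-verified Lean document; each statement's English description precedes it below -/
import Mathlib

section
/- Let H be a real Hilbert space and let F ⊆ H be a linear subspace equipped with an inner product whose associated (prehilbertian) norm |·| makes the inclusion of F into H continuous, i.e. there is M > 0 with ‖φ‖_H ≤ M|φ| for all φ ∈ F. Let a : H × F → ℝ be bilinear such that for every fixed φ ∈ F the map u ↦ a(u,φ) is a continuous linear functional on H, and suppose a is coercive on F: there exists α > 0 with a(φ,φ) ≥ α|φ|² for all φ ∈ F. Then for every linear functional L : F → ℝ that is continuous with respect to |·| (i.e. there is K with |L(φ)| ≤ K|φ| for all φ ∈ F), there exists u ∈ H such that a(u,φ) = L(φ) for all φ ∈ F. -/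
set_option maxHeartbeats 1000000 in
/-- **Lions' representation theorem** (Theorem 2.3): a variant of Lax–Milgram where
coercivity is only required on a subspace `F` of the Hilbert space `H`, with respect to a
(possibly different) prehilbertian norm `φ ↦ √(p φ φ)` on `F`. -/
theorem lions_representation
    {H : Type*} [NormedAddCommGroup H] [InnerProductSpace ℝ H] [CompleteSpace H]
    (F : Submodule ℝ H)
    -- the inner product on `F` inducing the prehilbertian norm `φ ↦ √(p φ φ)`
    (p : F →ₗ[ℝ] F →ₗ[ℝ] ℝ)
    (hp_symm : ∀ φ ψ : F, p φ ψ = p ψ φ)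
    (hp_nonneg : ∀ φ : F, 0 ≤ p φ φ)
    -- continuity of the inclusion `F ↪ H` with respect to the prehilbertian norm
    (M : ℝ) (hM : 0 < M)
    (hFH : ∀ φ : F, ‖(φ : H)‖ ≤ M * Real.sqrt (p φ φ))
    -- a bilinear form on `H × F`, continuous in the first variable
    (a : H →ₗ[ℝ] F →ₗ[ℝ] ℝ)
    (ha_cont : ∀ φ : F, Continuous fun u : H => a u φ)
    -- coercivity on `F`: `a (φ, φ) ≥ α |φ|²`
    (α : ℝ) (hα : 0 < α)
    (hcoer : ∀ φ : F, α * p φ φ ≤ a (φ : H) φ)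
    -- a linear functional on `F`, continuous with respect to the prehilbertian norm
    (L : F →ₗ[ℝ] ℝ) (K : ℝ)
    (hL : ∀ φ : F, |L φ| ≤ K * Real.sqrt (p φ φ)) :
    ∃ u : H, ∀ φ : F, a u φ = L φ := by
  classical
  -- the continuous linear functional `u ↦ a u φ`
  set f : F → (H →L[ℝ] ℝ) := fun φ => ⟨a.flip φ, ha_cont φ⟩ with hf
  have hf_apply : ∀ (φ : F) (u : H), f φ u = a u φ := fun φ u => rfl
  -- Riesz representative
  set B : F →ₗ[ℝ] H :=
    { toFun := fun φ => (InnerProductSpace.toDual ℝ H).symm (f φ)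
      map_add' := by
        intro φ ψ
        have h : f (φ + ψ) = f φ + f ψ := by
          ext u; simp [hf_apply]
        show (InnerProductSpace.toDual ℝ H).symm (f (φ + ψ))
            = (InnerProductSpace.toDual ℝ H).symm (f φ) + (InnerProductSpace.toDual ℝ H).symm (f ψ)
        rw [h, map_add]
      map_smul' := by
        intro c φ
        have h : f (c • φ) = c • f φ := by
          ext u; simp [hf_apply]
        show (InnerProductSpace.toDual ℝ H).symm (f (c • φ))
            = (RingHom.id ℝ) c • (InnerProductSpace.toDual ℝ H).symm (f φ)
        rw [h, map_smul]; rfl } with hB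
  have hB_inner : ∀ (φ : F) (u : H), inner ℝ (B φ) u = a u φ := by
    intro φ u
    show inner ℝ ((InnerProductSpace.toDual ℝ H).symm (f φ)) u = a u φ
    rw [InnerProductSpace.toDual_symm_apply]
    exact hf_apply φ u
  -- key estimate : √(p φ φ) ≤ (M/α) ‖B φ‖
  have hkey : ∀ φ : F, Real.sqrt (p φ φ) ≤ (M / α) * ‖B φ‖ := by
    intro φ
    have h1 : α * p φ φ ≤ ‖B φ‖ * ‖(φ : H)‖ := by
      calc α * p φ φ ≤ a (φ : H) φ := hcoer φ
        _ = inner ℝ (B φ) (φ : H) := (hB_inner φ φ).symm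
        _ ≤ ‖B φ‖ * ‖(φ : H)‖ := real_inner_le_norm _ _
    have h2 : α * (Real.sqrt (p φ φ))^2 ≤ ‖B φ‖ * (M * Real.sqrt (p φ φ)) := by
      rw [Real.sq_sqrt (hp_nonneg φ)]
      exact h1.trans (mul_le_mul_of_nonneg_left (hFH φ) (norm_nonneg _))
    rcases eq_or_lt_of_le (Real.sqrt_nonneg (p φ φ)) with h0 | h0
    · rw [← h0]
      positivity
    · have := le_of_mul_le_mul_right (by nlinarith [h2] : (α * Real.sqrt (p φ φ)) * Real.sqrt (p φ φ) ≤ (‖B φ‖ * M) * Real.sqrt (p φ φ)) h0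
      rw [div_mul_eq_mul_div, le_div_iff₀ hα]
      nlinarith
  -- `L` vanishes on `ker B`
  have hker : LinearMap.ker B ≤ LinearMap.ker L := by
    intro φ hφ
    have hφ0 : B φ = 0 := hφ
    have : Real.sqrt (p φ φ) ≤ 0 := by
      have := hkey φ
      rw [hφ0, norm_zero, mul_zero] at this
      exact this
    have hs : Real.sqrt (p φ φ) = 0 := le_antisymm this (Real.sqrt_nonneg _)
    have : |L φ| ≤ 0 := by
      have := hL φ; rw [hs, mul_zero] at this; exact this
    have : L φ = 0 := abs_nonpos_iff.mp this
    exact this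
  -- factor `L` through the range of `B`
  set G : Submodule ℝ H := LinearMap.range B with hG
  set e : (F ⧸ LinearMap.ker B) ≃ₗ[ℝ] G := B.quotKerEquivRange with he
  set ℓ : G →ₗ[ℝ] ℝ := (Submodule.liftQ (LinearMap.ker B) L hker).comp e.symm.toLinearMap with hℓ
  have hℓB : ∀ φ : F, ℓ ⟨B φ, LinearMap.mem_range_self B φ⟩ = L φ := by
    intro φ
    have h1 : e (Submodule.Quotient.mk φ) = ⟨B φ, LinearMap.mem_range_self B φ⟩ := by
      apply Subtype.ext
      rfl
    rw [hℓ]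
    simp only [LinearMap.comp_apply, LinearEquiv.coe_toLinearMap]
    rw [← h1, LinearEquiv.symm_apply_apply]
    simp
  -- `ℓ` is bounded
  set C : ℝ := max K 0 * (M / α) with hC
  have hℓ_bound : ∀ g : G, |ℓ g| ≤ C * ‖(g : H)‖ := by
    rintro ⟨g, hg⟩
    obtain ⟨φ, rfl⟩ := hg
    rw [hℓB φ]
    calc |L φ| ≤ K * Real.sqrt (p φ φ) := hL φ
      _ ≤ max K 0 * Real.sqrt (p φ φ) :=
        mul_le_mul_of_nonneg_right (le_max_left _ _) (Real.sqrt_nonneg _)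
      _ ≤ max K 0 * ((M / α) * ‖B φ‖) :=
        mul_le_mul_of_nonneg_left (hkey φ) (le_max_right _ _)
      _ = C * ‖B φ‖ := by ring
  -- make it a continuous linear functional on `G`
  set ℓ' : G →L[ℝ] ℝ := LinearMap.mkContinuous ℓ C (fun g => by
    rw [Real.norm_eq_abs]
    simpa using hℓ_bound g) with hℓ'
  -- extend to all of `H` by Hahn–Banach
  obtain ⟨g, hg, -⟩ := exists_extension_norm_eq G ℓ'
  -- Riesz representation of the extension
  refine ⟨(InnerProductSpace.toDual ℝ H).symm g, fun φ => ?_⟩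
  have h1 : (a ((InnerProductSpace.toDual ℝ H).symm g)) φ
      = inner ℝ (B φ) ((InnerProductSpace.toDual ℝ H).symm g : H) := (hB_inner φ _).symm
  rw [h1, real_inner_comm, InnerProductSpace.toDual_symm_apply]
  have := hg ⟨B φ, LinearMap.mem_range_self B φ⟩
  rw [this]
  exact hℓB φ
end

section
/- The pencil beam U is a classical solution of the Fermi pencil-beam equation on the open half-space: for all X', V ∈ ℝ^{n−1} and all t > 0, ∂_t U(X',t,V) + V·∇_{X'} U(X',t,V) − σ̃(t) Δ_V U(X',t,V) + λ̃(t) U(X',t,V) = 0, where ∇_{X'} is the gradient in X' and Δ_V is the Euclidean Laplacian in V. -/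
open MeasureTheory Real
open scoped RealInnerProductSpace

/-- The Gaussian kernel `G_{a,b,c}` on `ℝ^{n-1} × ℝ^{n-1}`. -/
noncomputable def Gkernel (n : ℕ) (a b c : ℝ)
    (X V : EuclideanSpace ℝ (Fin (n - 1))) : ℝ :=
  ((4 * Real.pi * Real.sqrt (a * c - b ^ 2)) ^ (n - 1))⁻¹ *
    Real.exp (-(a * ‖X‖ ^ 2 + 2 * b * ⟪X, V⟫ + c * ‖V‖ ^ 2) /
      (4 * (a * c - b ^ 2)))

/-- The pencil beam `U(X',t,V) = e^{-Λ(t)} G_{a(t),b(t),c(t)}(X' - tV, V - Θ)` with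
`a(t) = ∫₀ᵗ σ̃`, `b(t) = ∫₀ᵗ s σ̃(s) ds`, `c(t) = ∫₀ᵗ s² σ̃(s) ds`, `Λ(t) = ∫₀ᵗ λ̃`. -/
noncomputable def pencilBeam (n : ℕ) (sig lam : ℝ → ℝ)
    (Θ : EuclideanSpace ℝ (Fin (n - 1)))
    (X' : EuclideanSpace ℝ (Fin (n - 1))) (t : ℝ)
    (V : EuclideanSpace ℝ (Fin (n - 1))) : ℝ :=
  Real.exp (-(∫ s in (0:ℝ)..t, lam s)) *
    Gkernel n (∫ s in (0:ℝ)..t, sig s) (∫ s in (0:ℝ)..t, s * sig s)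
      (∫ s in (0:ℝ)..t, s ^ 2 * sig s) (X' - t • V) (V - Θ)

/- ### Auxiliary lemmas -/

lemma intInt_of_cont {f : ℝ → ℝ} (hf : ContinuousOn f (Set.Ici 0)) {t : ℝ} (ht : 0 < t) :
    IntervalIntegrable f volume 0 t := by
  apply ContinuousOn.intervalIntegrable
  apply hf.mono
  rw [Set.uIcc_of_le ht.le]
  exact Set.Icc_subset_Ici_self

lemma hasDerivAt_primitive {f : ℝ → ℝ} (hf : ContinuousOn f (Set.Ici 0)) {t : ℝ} (ht : 0 < t) :
    HasDerivAt (fun u => ∫ s in (0:ℝ)..u, f s) (f t) t := by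
  apply intervalIntegral.integral_hasDerivAt_right (intInt_of_cont hf ht)
  · exact ⟨Set.Ioi 0, Ioi_mem_nhds ht,
      (hf.mono (Set.Ioi_subset_Ici le_rfl)).aestronglyMeasurable measurableSet_Ioi⟩
  · exact hf.continuousAt (Ici_mem_nhds ht)

lemma A_lb {sig : ℝ → ℝ} {σ₀ : ℝ}
    (hsig_cont : ContinuousOn sig (Set.Ici 0))
    (hsig_lb : ∀ s, 0 ≤ s → σ₀ ≤ sig s) {t : ℝ} (ht : 0 < t) :
    σ₀ * t ≤ ∫ s in (0:ℝ)..t, sig s := by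
  have h0 : (∫ s in (0:ℝ)..t, σ₀) = σ₀ * t := by
    simp [intervalIntegral.integral_const]; ring
  rw [← h0]
  apply intervalIntegral.integral_mono_on ht.le (by simp) (intInt_of_cont hsig_cont ht)
  intro x hx; exact hsig_lb x hx.1

lemma delta_pos {sig : ℝ → ℝ} {σ₀ : ℝ} (hσ₀ : 0 < σ₀)
    (hsig_cont : ContinuousOn sig (Set.Ici 0))
    (hsig_lb : ∀ s, 0 ≤ s → σ₀ ≤ sig s) {t : ℝ} (ht : 0 < t) :
    0 < (∫ s in (0:ℝ)..t, sig s) * (∫ s in (0:ℝ)..t, s^2 * sig s)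
        - (∫ s in (0:ℝ)..t, s * sig s)^2 := by
  set A := ∫ s in (0:ℝ)..t, sig s with hA
  set B := ∫ s in (0:ℝ)..t, s * sig s with hB
  set C := ∫ s in (0:ℝ)..t, s^2 * sig s with hC
  have hApos : 0 < A := lt_of_lt_of_le (by positivity) (A_lb hsig_cont hsig_lb ht)
  set r := B / A with hr
  have hc1 : ContinuousOn (fun s => s * sig s) (Set.Ici 0) := (continuousOn_id).mul hsig_cont
  have hc2 : ContinuousOn (fun s : ℝ => s^2 * sig s) (Set.Ici 0) :=
    ((continuousOn_id).pow 2).mul hsig_cont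
  have hc3 : ContinuousOn (fun s : ℝ => sig s * (s - r)^2) (Set.Ici 0) :=
    hsig_cont.mul (((continuousOn_id).sub continuousOn_const).pow 2)
  have hkey : (∫ s in (0:ℝ)..t, sig s * (s - r)^2) = C - 2*r*B + r^2*A := by
    have e1 : ∀ s : ℝ, sig s * (s - r)^2
        = s^2 * sig s - (2*r) * (s * sig s) + r^2 * sig s := by intro s; ring
    rw [intervalIntegral.integral_congr (g := fun s => s^2 * sig s - (2*r) * (s * sig s) + r^2 * sig s) (fun s _ => e1 s)]
    rw [intervalIntegral.integral_add (((intInt_of_cont hc2 ht).sub ((intInt_of_cont hc1 ht).const_mul _)))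
      ((intInt_of_cont hsig_cont ht).const_mul _),
      intervalIntegral.integral_sub (intInt_of_cont hc2 ht) ((intInt_of_cont hc1 ht).const_mul _),
      intervalIntegral.integral_const_mul, intervalIntegral.integral_const_mul]
  have hip : IntervalIntegrable (fun s : ℝ => s^2) volume 0 t :=
    (continuous_pow 2).intervalIntegrable _ _
  have him : IntervalIntegrable (fun s : ℝ => (2*r)*s) volume 0 t :=
    (continuous_const.mul continuous_id).intervalIntegrable _ _
  have hlb : σ₀ * (t^3/3 - r*t^2 + r^2*t) ≤ ∫ s in (0:ℝ)..t, sig s * (s - r)^2 := by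
    have hcomp : (∫ s in (0:ℝ)..t, σ₀ * (s - r)^2) = σ₀ * (t^3/3 - r*t^2 + r^2*t) := by
      rw [intervalIntegral.integral_const_mul]
      have e2 : (∫ s in (0:ℝ)..t, (s - r)^2)
          = ∫ s in (0:ℝ)..t, (s^2 - (2*r)*s + r^2) := by
        apply intervalIntegral.integral_congr; intro s _; ring
      rw [e2, intervalIntegral.integral_add (hip.sub him)
            (intervalIntegrable_const),
          intervalIntegral.integral_sub hip him,
          intervalIntegral.integral_const_mul, integral_pow,
          integral_id, intervalIntegral.integral_const]
      simp only [smul_eq_mul]; push_cast; ring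
    rw [← hcomp]
    apply intervalIntegral.integral_mono_on ht.le
      ((continuous_const.mul ((continuous_id.sub continuous_const).pow 2)).intervalIntegrable _ _)
      (intInt_of_cont hc3 ht)
    intro x hx
    have := hsig_lb x hx.1
    simp only [Pi.mul_apply, Pi.pow_apply, Pi.sub_apply, id_eq, ← hr]
    nlinarith [sq_nonneg (x - r)]
  have hpos : 0 < t^3/3 - r*t^2 + r^2*t := by
    nlinarith [mul_nonneg ht.le (sq_nonneg (r - t/2)), pow_pos ht 3]
  have hI : 0 < C - 2*r*B + r^2*A := by
    rw [← hkey]; exact lt_of_lt_of_le (by positivity) hlb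
  have : C - 2*r*B + r^2*A = (A*C - B^2)/A := by
    rw [hr]; field_simp; ring
  rw [this] at hI
  exact (div_pos_iff.mp hI).resolve_right (fun h => absurd hApos (not_lt.mpr h.2.le)) |>.1

lemma hasDerivAt_quadExp (K p q r D : ℝ) (s : ℝ) :
    HasDerivAt (fun s : ℝ => K * Real.exp (-(p*s^2 + q*s + r)/D))
      (K * Real.exp (-(p*s^2+q*s+r)/D) * (-(2*p*s + q)/D)) s := by
  have hu : HasDerivAt (fun s : ℝ => -(p*s^2 + q*s + r)/D) (-(2*p*s + q)/D) s := by
    have h1 : HasDerivAt (fun s : ℝ => p*s^2 + q*s + r) (2*p*s + q) s := by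
      have := (((hasDerivAt_pow 2 s).const_mul p).add ((hasDerivAt_id s).const_mul q)).add_const r
      exact this.congr_deriv (by push_cast; ring)
    exact (h1.neg).div_const D
  have := (hu.exp).const_mul K
  exact this.congr_deriv (by ring)

lemma deriv_quadExp (K p q r D : ℝ) :
    deriv (fun s : ℝ => K * Real.exp (-(p*s^2 + q*s + r)/D)) 0
      = K * Real.exp (-r/D) * (-q/D) := by
  have := (hasDerivAt_quadExp K p q r D 0).deriv
  rw [this]; norm_num

lemma iteratedDeriv_two_quadExp (K p q r D : ℝ) :
    iteratedDeriv 2 (fun s : ℝ => K * Real.exp (-(p*s^2 + q*s + r)/D)) 0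
      = K * Real.exp (-r/D) * (q^2/D^2 - 2*p/D) := by
  rw [show (2:ℕ) = 1 + 1 from rfl, iteratedDeriv_succ, iteratedDeriv_one]
  have hd : deriv (fun s : ℝ => K * Real.exp (-(p*s^2 + q*s + r)/D))
      = fun s => K * Real.exp (-(p*s^2+q*s+r)/D) * (-(2*p*s + q)/D) := by
    funext s; exact (hasDerivAt_quadExp K p q r D s).deriv
  rw [hd]
  have h2 : HasDerivAt (fun s : ℝ => K * Real.exp (-(p*s^2+q*s+r)/D) * (-(2*p*s + q)/D))
      (K * Real.exp (-(p*0^2+q*0+r)/D) * (-(2*p*0 + q)/D) * (-(2*p*0 + q)/D)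
        + K * Real.exp (-(p*0^2+q*0+r)/D) * (-(2*p)/D)) 0 := by
    have hlin : HasDerivAt (fun s : ℝ => -(2*p*s + q)/D) (-(2*p)/D) 0 := by
      have := (((hasDerivAt_id (0:ℝ)).const_mul (2*p)).add_const q).neg.div_const D
      exact this.congr_deriv (by ring_nf)
    exact (hasDerivAt_quadExp K p q r D 0).mul hlin
  rw [h2.deriv]; norm_num; ring

lemma inv_pow_exp (md : ℕ) {d : ℝ} (hd : 0 < d) :
    ((4*Real.pi*Real.sqrt d)^md)⁻¹
      = Real.exp (-((md:ℝ) * Real.log (4*Real.pi) + (md:ℝ)/2 * Real.log d)) := by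
  have h1 : (0:ℝ) < 4*Real.pi*Real.sqrt d := by positivity
  rw [Real.exp_neg]
  congr 1
  rw [← Real.exp_log (pow_pos h1 md), Real.log_pow]
  conv_lhs => rw [Real.log_mul (by positivity) (by positivity), Real.log_sqrt hd.le]
  ring_nf

set_option maxHeartbeats 2000000 in
/-- The pencil beam is a classical solution of the Fermi pencil-beam equation. -/
theorem pencilBeam_solves_fermi_equation
    (n : ℕ) (hn : 2 ≤ n)
    (sig lam : ℝ → ℝ) (σ₀ : ℝ) (hσ₀ : 0 < σ₀)
    (hsig_cont : ContinuousOn sig (Set.Ici 0))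
    (hsig_lb : ∀ s, 0 ≤ s → σ₀ ≤ sig s)
    (hlam_cont : ContinuousOn lam (Set.Ici 0))
    (Θ X' V : EuclideanSpace ℝ (Fin (n - 1))) (t : ℝ) (ht : 0 < t) :
    deriv (fun s => pencilBeam n sig lam Θ X' s V) t
      + ∑ i : Fin (n - 1), V i *
          deriv (fun s : ℝ =>
            pencilBeam n sig lam Θ (X' + s • EuclideanSpace.single i 1) t V) 0
      - sig t * ∑ i : Fin (n - 1),
          iteratedDeriv 2 (fun s : ℝ =>
            pencilBeam n sig lam Θ X' t (V + s • EuclideanSpace.single i 1)) 0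
      + lam t * pencilBeam n sig lam Θ X' t V = 0 := by
  classical
  -- basic derivatives of the coefficient functions
  have hfa : HasDerivAt (fun u => ∫ s in (0:ℝ)..u, sig s) (sig t) t :=
    hasDerivAt_primitive hsig_cont ht
  have hfb : HasDerivAt (fun u => ∫ s in (0:ℝ)..u, s * sig s) (t * sig t) t := by
    simpa using hasDerivAt_primitive (f := fun s => s * sig s)
      (continuousOn_id.mul hsig_cont) ht
  have hfc : HasDerivAt (fun u => ∫ s in (0:ℝ)..u, s ^ 2 * sig s) (t ^ 2 * sig t) t := by
    simpa using hasDerivAt_primitive (f := fun s : ℝ => s ^ 2 * sig s)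
      ((continuousOn_id.pow 2).mul hsig_cont) ht
  have hfl : HasDerivAt (fun u => ∫ s in (0:ℝ)..u, lam s) (lam t) t :=
    hasDerivAt_primitive hlam_cont ht
  have hΔpos : 0 < (∫ s in (0:ℝ)..t, sig s) * (∫ s in (0:ℝ)..t, s ^ 2 * sig s)
      - (∫ s in (0:ℝ)..t, s * sig s) ^ 2 := delta_pos hσ₀ hsig_cont hsig_lb ht
  have hΔne : (∫ s in (0:ℝ)..t, sig s) * (∫ s in (0:ℝ)..t, s ^ 2 * sig s)
      - (∫ s in (0:ℝ)..t, s * sig s) ^ 2 ≠ 0 := hΔpos.ne'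
  -- derivative of Δ(t) = a c - b²
  have hΔdt : HasDerivAt (fun u : ℝ => (∫ s in (0:ℝ)..u, sig s) * (∫ s in (0:ℝ)..u, s ^ 2 * sig s)
      - (∫ s in (0:ℝ)..u, s * sig s) ^ 2)
      (sig t * (∫ s in (0:ℝ)..t, s ^ 2 * sig s) + (∫ s in (0:ℝ)..t, sig s) * (t ^ 2 * sig t)
        - 2 * (∫ s in (0:ℝ)..t, s * sig s) * (t * sig t)) t := by
    have h := (hfa.mul hfc).sub (hfb.pow 2)
    refine h.congr_deriv ?_
    try beta_reduce
    push_cast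
    ring
  have hlog : HasDerivAt (fun u : ℝ => Real.log ((∫ s in (0:ℝ)..u, sig s) * (∫ s in (0:ℝ)..u, s ^ 2 * sig s)
      - (∫ s in (0:ℝ)..u, s * sig s) ^ 2))
      ((sig t * (∫ s in (0:ℝ)..t, s ^ 2 * sig s) + (∫ s in (0:ℝ)..t, sig s) * (t ^ 2 * sig t)
        - 2 * (∫ s in (0:ℝ)..t, s * sig s) * (t * sig t))
        / ((∫ s in (0:ℝ)..t, sig s) * (∫ s in (0:ℝ)..t, s ^ 2 * sig s)
            - (∫ s in (0:ℝ)..t, s * sig s) ^ 2)) t := hΔdt.log hΔne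
  -- derivative of N(t)
  have hP : HasDerivAt (fun u : ℝ => ‖X'‖ ^ 2 - 2 * ⟪X', V⟫ * u + ‖V‖ ^ 2 * u ^ 2)
      (-(2 * ⟪X', V⟫) + ‖V‖ ^ 2 * (2 * t)) t := by
    have h := (((hasDerivAt_id t).const_mul (2 * ⟪X', V⟫)).const_sub (‖X'‖ ^ 2)).add
      ((hasDerivAt_pow 2 t).const_mul (‖V‖ ^ 2))
    refine h.congr_deriv ?_
    try beta_reduce
    push_cast
    ring
  have hQ : HasDerivAt (fun u : ℝ => ⟪X', V - Θ⟫ - ⟪V, V - Θ⟫ * u) (-⟪V, V - Θ⟫) t := by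
    have h := ((hasDerivAt_id t).const_mul ⟪V, V - Θ⟫).const_sub ⟪X', V - Θ⟫
    refine h.congr_deriv ?_
    try beta_reduce
    ring
  have hNdt : HasDerivAt (fun u : ℝ =>
      (∫ s in (0:ℝ)..u, sig s) * (‖X'‖ ^ 2 - 2 * ⟪X', V⟫ * u + ‖V‖ ^ 2 * u ^ 2)
        + 2 * (∫ s in (0:ℝ)..u, s * sig s) * (⟪X', V - Θ⟫ - ⟪V, V - Θ⟫ * u)
        + (∫ s in (0:ℝ)..u, s ^ 2 * sig s) * ‖V - Θ‖ ^ 2)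
      (sig t * (‖X'‖ ^ 2 - 2 * ⟪X', V⟫ * t + ‖V‖ ^ 2 * t ^ 2)
        + (∫ s in (0:ℝ)..t, sig s) * (-(2 * ⟪X', V⟫) + ‖V‖ ^ 2 * (2 * t))
        + 2 * (t * sig t) * (⟪X', V - Θ⟫ - ⟪V, V - Θ⟫ * t)
        + 2 * (∫ s in (0:ℝ)..t, s * sig s) * (-⟪V, V - Θ⟫)
        + t ^ 2 * sig t * ‖V - Θ‖ ^ 2) t := by
    have h := ((hfa.mul hP).add ((hfb.const_mul 2).mul hQ)).add (hfc.mul_const (‖V - Θ‖ ^ 2))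
    refine h.congr_deriv ?_
    try beta_reduce
    ring
  -- derivative of the quotient N/(4Δ)
  have hquot : HasDerivAt (fun u : ℝ =>
      ((∫ s in (0:ℝ)..u, sig s) * (‖X'‖ ^ 2 - 2 * ⟪X', V⟫ * u + ‖V‖ ^ 2 * u ^ 2)
        + 2 * (∫ s in (0:ℝ)..u, s * sig s) * (⟪X', V - Θ⟫ - ⟪V, V - Θ⟫ * u)
        + (∫ s in (0:ℝ)..u, s ^ 2 * sig s) * ‖V - Θ‖ ^ 2)
        / (4 * ((∫ s in (0:ℝ)..u, sig s) * (∫ s in (0:ℝ)..u, s ^ 2 * sig s)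
            - (∫ s in (0:ℝ)..u, s * sig s) ^ 2)))
      (((sig t * (‖X'‖ ^ 2 - 2 * ⟪X', V⟫ * t + ‖V‖ ^ 2 * t ^ 2)
          + (∫ s in (0:ℝ)..t, sig s) * (-(2 * ⟪X', V⟫) + ‖V‖ ^ 2 * (2 * t))
          + 2 * (t * sig t) * (⟪X', V - Θ⟫ - ⟪V, V - Θ⟫ * t)
          + 2 * (∫ s in (0:ℝ)..t, s * sig s) * (-⟪V, V - Θ⟫)
          + t ^ 2 * sig t * ‖V - Θ‖ ^ 2)
          * (4 * ((∫ s in (0:ℝ)..t, sig s) * (∫ s in (0:ℝ)..t, s ^ 2 * sig s)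
              - (∫ s in (0:ℝ)..t, s * sig s) ^ 2))
        - ((∫ s in (0:ℝ)..t, sig s) * (‖X'‖ ^ 2 - 2 * ⟪X', V⟫ * t + ‖V‖ ^ 2 * t ^ 2)
            + 2 * (∫ s in (0:ℝ)..t, s * sig s) * (⟪X', V - Θ⟫ - ⟪V, V - Θ⟫ * t)
            + (∫ s in (0:ℝ)..t, s ^ 2 * sig s) * ‖V - Θ‖ ^ 2)
          * (4 * (sig t * (∫ s in (0:ℝ)..t, s ^ 2 * sig s)
              + (∫ s in (0:ℝ)..t, sig s) * (t ^ 2 * sig t)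
              - 2 * (∫ s in (0:ℝ)..t, s * sig s) * (t * sig t))))
        / (4 * ((∫ s in (0:ℝ)..t, sig s) * (∫ s in (0:ℝ)..t, s ^ 2 * sig s)
            - (∫ s in (0:ℝ)..t, s * sig s) ^ 2)) ^ 2) t := by
    have h := hNdt.div (hΔdt.const_mul 4)
      (by simpa using mul_ne_zero (by norm_num : (4:ℝ) ≠ 0) hΔne)
    refine h.congr_deriv ?_
    try beta_reduce
    try ring
  -- derivative of the full exponent
  have hLdt : HasDerivAt (fun u : ℝ => (-(∫ s in (0:ℝ)..u, lam s) - ((n-1 : ℕ) : ℝ) * Real.log (4 * Real.pi) - ((n-1 : ℕ) : ℝ) / 2 * Real.log ((∫ s in (0:ℝ)..u, sig s) * (∫ s in (0:ℝ)..u, s ^ 2 * sig s) - (∫ s in (0:ℝ)..u, s * sig s) ^ 2) - ((∫ s in (0:ℝ)..u, sig s) * (‖X'‖ ^ 2 - 2 * ⟪X', V⟫ * u + ‖V‖ ^ 2 * u ^ 2) + 2 * (∫ s in (0:ℝ)..u, s * sig s) * (⟪X', V - Θ⟫ - ⟪V, V - Θ⟫ * u) + (∫ s in (0:ℝ)..u,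 s ^ 2 * sig s) * ‖V - Θ‖ ^ 2) / (4 * ((∫ s in (0:ℝ)..u, sig s) * (∫ s in (0:ℝ)..u, s ^ 2 * sig s) - (∫ s in (0:ℝ)..u, s * sig s) ^ 2))))
      (-(lam t) - ((n-1 : ℕ) : ℝ) / 2 * ((sig t * (∫ s in (0:ℝ)..t, s ^ 2 * sig s) + (∫ s in (0:ℝ)..t, sig s) * (t ^ 2 * sig t) - 2 * (∫ s in (0:ℝ)..t, s * sig s) * (t * sig t)) / ((∫ s in (0:ℝ)..t, sig s) * (∫ s in (0:ℝ)..t, s ^ 2 * sig s) - (∫ s in (0:ℝ)..t, s * sig s) ^ 2)) - (((sig t * (‖X'‖ ^ 2 - 2 * ⟪X', V⟫ * t + ‖V‖ ^ 2 * t ^ 2) + (∫ s in (0:ℝ)..t, sig s) * (-(2 * ⟪X', V⟫) + ‖V‖ ^ 2 * (2 * t)) + 2 * (t * sig t) * (⟪X', V - Θ⟫ - ⟪V, V - Θ⟫ * t) + 2 * (∫ s in (0:ℝ)..t, s * sig s) * (-⟪V, V - Θ⟫) + t ^ 2 * sig t * ‖V - Θ‖ ^ 2) * (4 * ((∫ s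 in (0:ℝ)..t, sig s) * (∫ s in (0:ℝ)..t, s ^ 2 * sig s) - (∫ s in (0:ℝ)..t, s * sig s) ^ 2)) - ((∫ s in (0:ℝ)..t, sig s) * (‖X'‖ ^ 2 - 2 * ⟪X', V⟫ * t + ‖V‖ ^ 2 * t ^ 2) + 2 * (∫ s in (0:ℝ)..t, s * sig s) * (⟪X', V - Θ⟫ - ⟪V, V - Θ⟫ * t) + (∫ s in (0:ℝ)..t, s ^ 2 * sig s) * ‖V - Θ‖ ^ 2) * (4 * (sig t * (∫ s in (0:ℝ)..t, s ^ 2 * sig s) + (∫ s in (0:ℝ)..t, sig s) * (t ^ 2 * sig t) - 2 * (∫ s in (0:ℝ)..t, s * sig s) * (t * sig t)))) / (4 * ((∫ s in (0:ℝ)..t, sig s) * (∫ s in (0:ℝ)..t, s ^ 2 * sig s) - (∫ s in (0:ℝ)..t, s * sig s) ^ 2)) ^ 2)) t := by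
    have h := ((hfl.neg.sub_const (((n-1 : ℕ) : ℝ) * Real.log (4 * Real.pi))).sub
      (hlog.const_mul (((n-1 : ℕ) : ℝ) / 2))).sub hquot
    exact h
  -- pointwise identification of the pencil beam with the exponential form
  have key : ∀ u : ℝ, 0 < (∫ s in (0:ℝ)..u, sig s) * (∫ s in (0:ℝ)..u, s ^ 2 * sig s)
      - (∫ s in (0:ℝ)..u, s * sig s) ^ 2 →
      pencilBeam n sig lam Θ X' u V = Real.exp (-(∫ s in (0:ℝ)..u, lam s) - ((n-1 : ℕ) : ℝ) * Real.log (4 * Real.pi) - ((n-1 : ℕ) : ℝ) / 2 * Real.log ((∫ s in (0:ℝ)..u, sig s) * (∫ s in (0:ℝ)..u, s ^ 2 * sig s) - (∫ s in (0:ℝ)..u, s * sig s) ^ 2) - ((∫ s in (0:ℝ)..u, sig s) * (‖X'‖ ^ 2 - 2 * ⟪X', V⟫ * u + ‖V‖ ^ 2 * u ^ 2) + 2 * (∫ s in (0:ℝ)..u, s * sig s) * (⟪X', V - Θ⟫ - ⟪V, V - Θ⟫ * u) + (∫ s in (0:ℝ)..u, s ^ 2 * sig s) * ‖V - Θ‖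 ^ 2) / (4 * ((∫ s in (0:ℝ)..u, sig s) * (∫ s in (0:ℝ)..u, s ^ 2 * sig s) - (∫ s in (0:ℝ)..u, s * sig s) ^ 2))) := by
    intro u hu
    have en : ‖X' - u • V‖ ^ 2 = ‖X'‖ ^ 2 - 2 * ⟪X', V⟫ * u + ‖V‖ ^ 2 * u ^ 2 := by
      rw [norm_sub_sq_real, real_inner_smul_right, norm_smul]
      simp only [Real.norm_eq_abs, mul_pow, sq_abs]
      ring
    have ei : ⟪X' - u • V, V - Θ⟫ = ⟪X', V - Θ⟫ - ⟪V, V - Θ⟫ * u := by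
      rw [inner_sub_left, real_inner_smul_left]; ring
    simp only [pencilBeam, Gkernel]
    rw [inv_pow_exp (n-1) hu, en, ei, ← Real.exp_add, ← Real.exp_add]
    congr 1
    ring
  have hevpos : ∀ᶠ u in nhds t, 0 < (∫ s in (0:ℝ)..u, sig s) * (∫ s in (0:ℝ)..u, s ^ 2 * sig s)
      - (∫ s in (0:ℝ)..u, s * sig s) ^ 2 := by
    have hc : ContinuousAt (fun u : ℝ => (∫ s in (0:ℝ)..u, sig s) * (∫ s in (0:ℝ)..u, s ^ 2 * sig s)
        - (∫ s in (0:ℝ)..u, s * sig s) ^ 2) t := hΔdt.continuousAt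
    filter_upwards [hc (Ioi_mem_nhds hΔpos)] with u hu
    exact hu
  have hev : (fun u => pencilBeam n sig lam Θ X' u V) =ᶠ[nhds t]
      (fun u : ℝ => Real.exp (-(∫ s in (0:ℝ)..u, lam s) - ((n-1 : ℕ) : ℝ) * Real.log (4 * Real.pi) - ((n-1 : ℕ) : ℝ) / 2 * Real.log ((∫ s in (0:ℝ)..u, sig s) * (∫ s in (0:ℝ)..u, s ^ 2 * sig s) - (∫ s in (0:ℝ)..u, s * sig s) ^ 2) - ((∫ s in (0:ℝ)..u, sig s) * (‖X'‖ ^ 2 - 2 * ⟪X', V⟫ * u + ‖V‖ ^ 2 * u ^ 2) + 2 * (∫ s in (0:ℝ)..u, s * sig s) * (⟪X', V - Θ⟫ - ⟪V, V - Θ⟫ * u) + (∫ s in (0:ℝ)..u, s ^ 2 * sig s) * ‖V - Θ‖ ^ 2) / (4 * ((∫ s in (0:ℝ)..u, sig s) * (∫ s in (0:ℝ)..u, s ^ 2 * sig s) - (∫ s in (0:ℝ)..u, s * sig s) ^ 2)))) := by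
    filter_upwards [hevpos] with u hu
    exact key u hu
  have hT1 := (Filter.EventuallyEq.deriv_eq hev).trans (hLdt.exp).deriv
  beta_reduce at hT1
  rw [← key t hΔpos] at hT1
  -- coordinate-direction expansion helpers
  have expand_norm : ∀ (Y : EuclideanSpace ℝ (Fin (n-1))) (c : ℝ) (i : Fin (n-1)),
      ‖Y + c • EuclideanSpace.single i (1:ℝ)‖ ^ 2 = ‖Y‖ ^ 2 + 2 * (Y i) * c + c ^ 2 := by
    intro Y c i
    rw [norm_add_sq_real, real_inner_smul_right, norm_smul]
    simp [EuclideanSpace.inner_single_right, EuclideanSpace.norm_single, mul_pow,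
      Real.norm_eq_abs, sq_abs]
    ring
  have expand_inner_left : ∀ (Y Z : EuclideanSpace ℝ (Fin (n-1))) (c : ℝ) (i : Fin (n-1)),
      ⟪Y + c • EuclideanSpace.single i (1:ℝ), Z⟫ = ⟪Y, Z⟫ + (Z i) * c := by
    intro Y Z c i
    simp [inner_add_left, real_inner_smul_left, EuclideanSpace.inner_single_left]
    ring
  have expand_inner : ∀ (Y Z : EuclideanSpace ℝ (Fin (n-1))) (c d : ℝ) (i : Fin (n-1)),
      ⟪Y + c • EuclideanSpace.single i (1:ℝ), Z + d • EuclideanSpace.single i (1:ℝ)⟫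
        = ⟪Y, Z⟫ + (Z i) * c + (Y i) * d + c * d := by
    intro Y Z c d i
    simp [inner_add_left, inner_add_right, real_inner_smul_left, real_inner_smul_right,
      EuclideanSpace.inner_single_left, EuclideanSpace.inner_single_right,
      EuclideanSpace.single_apply]
    ring
  -- the spatial directional functions in quadratic-exponential form
  have hfun2 : ∀ i : Fin (n - 1),
      (fun s : ℝ => pencilBeam n sig lam Θ (X' + s • EuclideanSpace.single i 1) t V)
        = fun s : ℝ => (Real.exp (-(∫ s in (0:ℝ)..t, lam s)) * ((4 * Real.pi * Real.sqrt ((∫ s in (0:ℝ)..t, sig s) * (∫ s in (0:ℝ)..t, s ^ 2 * sig s) - (∫ s in (0:ℝ)..t, s * sig s) ^ 2)) ^ (n - 1))⁻¹) * Real.exp (-((∫ s in (0:ℝ)..t, sig s) * s ^ 2 + (2 * (∫ s in (0:ℝ)..t, sig s) * ((X' - t • V) i) + 2 * (∫ s in (0:ℝ)..t, s * sig s) * ((V - Θ) i)) * s + ((∫ s in (0:ℝ)..t, sig s) * ‖X' - t • V‖ ^ 2 + 2 * (∫ s in (0:ℝ)..t, s * sig s) * ⟪X' - t • V, V - Θ⟫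 + (∫ s in (0:ℝ)..t, s ^ 2 * sig s) * ‖V - Θ‖ ^ 2)) / (4 * ((∫ s in (0:ℝ)..t, sig s) * (∫ s in (0:ℝ)..t, s ^ 2 * sig s) - (∫ s in (0:ℝ)..t, s * sig s) ^ 2))) := by
    intro i
    funext s
    have harg : X' + s • EuclideanSpace.single i (1:ℝ) - t • V
        = (X' - t • V) + s • EuclideanSpace.single i (1:ℝ) := by abel
    simp only [pencilBeam, Gkernel, harg]
    rw [expand_norm (X' - t • V) s i, expand_inner_left (X' - t • V) (V - Θ) s i]
    rw [show -((∫ s in (0:ℝ)..t, sig s) * (‖X' - t • V‖ ^ 2 + 2 * ((X' - t • V) i) * s + s ^ 2)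
          + 2 * (∫ s in (0:ℝ)..t, s * sig s) * (⟪X' - t • V, V - Θ⟫ + ((V - Θ) i) * s) + (∫ s in (0:ℝ)..t, s ^ 2 * sig s) * ‖V - Θ‖ ^ 2) / (4 * ((∫ s in (0:ℝ)..t, sig s) * (∫ s in (0:ℝ)..t, s ^ 2 * sig s) - (∫ s in (0:ℝ)..t, s * sig s) ^ 2))
        = -((∫ s in (0:ℝ)..t, sig s) * s ^ 2 + (2 * (∫ s in (0:ℝ)..t, sig s) * ((X' - t • V) i) + 2 * (∫ s in (0:ℝ)..t, s * sig s) * ((V - Θ) i)) * s + ((∫ s in (0:ℝ)..t, sig s) * ‖X' - t • V‖ ^ 2 + 2 * (∫ s in (0:ℝ)..t, s * sig s) * ⟪X' - t • V, V - Θ⟫ + (∫ s in (0:ℝ)..t, s ^ 2 * sig s) * ‖V - Θ‖ ^ 2)) / (4 * ((∫ s in (0:ℝ)..t, sig s) * (∫ s in (0:ℝ)..t, s ^ 2 * sig s) - (∫ s in (0:ℝ)..t, s * sig s) ^ 2)) from by ring, ← mul_assoc]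
  -- the velocity directional functions in quadratic-exponential form
  have hfun3 : ∀ i : Fin (n - 1),
      (fun s : ℝ => pencilBeam n sig lam Θ X' t (V + s • EuclideanSpace.single i 1))
        = fun s : ℝ => (Real.exp (-(∫ s in (0:ℝ)..t, lam s)) * ((4 * Real.pi * Real.sqrt ((∫ s in (0:ℝ)..t, sig s) * (∫ s in (0:ℝ)..t, s ^ 2 * sig s) - (∫ s in (0:ℝ)..t, s * sig s) ^ 2)) ^ (n - 1))⁻¹) * Real.exp (-(((∫ s in (0:ℝ)..t, sig s) * t ^ 2 - 2 * (∫ s in (0:ℝ)..t, s * sig s) * t + (∫ s in (0:ℝ)..t, s ^ 2 * sig s)) * s ^ 2 + ((2 * (∫ s in (0:ℝ)..t, s * sig s) - 2 * (∫ s in (0:ℝ)..t, sig s) * t) * ((X' - t • V) i) + (2 * (∫ s in (0:ℝ)..t, s ^ 2 * sig s) - 2 * (∫ s in (0:ℝ)..t, s * sig s) * t) * ((V - Θ) i)) * s + ((∫ s in (0:ℝ)..t, sig s) * ‖X' - t • V‖ ^ 2 + 2 * (∫ s in (0:ℝ)..t, s * sig s) * ⟪X' - t • V, V - Θ⟫ +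 (∫ s in (0:ℝ)..t, s ^ 2 * sig s) * ‖V - Θ‖ ^ 2)) / (4 * ((∫ s in (0:ℝ)..t, sig s) * (∫ s in (0:ℝ)..t, s ^ 2 * sig s) - (∫ s in (0:ℝ)..t, s * sig s) ^ 2))) := by
    intro i
    funext s
    have harg : X' - t • (V + s • EuclideanSpace.single i (1:ℝ))
        = (X' - t • V) + (-(t * s)) • EuclideanSpace.single i (1:ℝ) := by
      rw [smul_add, smul_smul, neg_smul]; abel
    have harg2 : V + s • EuclideanSpace.single i (1:ℝ) - Θ
        = (V - Θ) + s • EuclideanSpace.single i (1:ℝ) := by abel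
    simp only [pencilBeam, Gkernel, harg, harg2]
    rw [expand_norm (X' - t • V) (-(t * s)) i, expand_norm (V - Θ) s i,
      expand_inner (X' - t • V) (V - Θ) (-(t * s)) s i]
    rw [show -((∫ s in (0:ℝ)..t, sig s) * (‖X' - t • V‖ ^ 2 + 2 * ((X' - t • V) i) * (-(t * s)) + (-(t * s)) ^ 2)
          + 2 * (∫ s in (0:ℝ)..t, s * sig s) * (⟪X' - t • V, V - Θ⟫ + ((V - Θ) i) * (-(t * s)) + ((X' - t • V) i) * s + (-(t * s)) * s)
          + (∫ s in (0:ℝ)..t, s ^ 2 * sig s) * (‖V - Θ‖ ^ 2 + 2 * ((V - Θ) i) * s + s ^ 2)) / (4 * ((∫ s in (0:ℝ)..t, sig s) * (∫ s in (0:ℝ)..t, s ^ 2 * sig s) - (∫ s in (0:ℝ)..t, s * sig s) ^ 2))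
        = -(((∫ s in (0:ℝ)..t, sig s) * t ^ 2 - 2 * (∫ s in (0:ℝ)..t, s * sig s) * t + (∫ s in (0:ℝ)..t, s ^ 2 * sig s)) * s ^ 2 + ((2 * (∫ s in (0:ℝ)..t, s * sig s) - 2 * (∫ s in (0:ℝ)..t, sig s) * t) * ((X' - t • V) i) + (2 * (∫ s in (0:ℝ)..t, s ^ 2 * sig s) - 2 * (∫ s in (0:ℝ)..t, s * sig s) * t) * ((V - Θ) i)) * s + ((∫ s in (0:ℝ)..t, sig s) * ‖X' - t • V‖ ^ 2 + 2 * (∫ s in (0:ℝ)..t, s * sig s) * ⟪X' - t • V, V - Θ⟫ + (∫ s in (0:ℝ)..t, s ^ 2 * sig s) * ‖V - Θ‖ ^ 2)) / (4 * ((∫ s in (0:ℝ)..t, sig s) * (∫ s in (0:ℝ)..t, s ^ 2 * sig s) - (∫ s in (0:ℝ)..t, s * sig s) ^ 2)) from by ring, ← mul_assoc]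
  have hd2 : ∀ i : Fin (n - 1),
      deriv (fun s : ℝ => pencilBeam n sig lam Θ (X' + s • EuclideanSpace.single i 1) t V) 0
        = (Real.exp (-(∫ s in (0:ℝ)..t, lam s)) * ((4 * Real.pi * Real.sqrt ((∫ s in (0:ℝ)..t, sig s) * (∫ s in (0:ℝ)..t, s ^ 2 * sig s) - (∫ s in (0:ℝ)..t, s * sig s) ^ 2)) ^ (n - 1))⁻¹) * Real.exp (-((∫ s in (0:ℝ)..t, sig s) * ‖X' - t • V‖ ^ 2 + 2 * (∫ s in (0:ℝ)..t, s * sig s) * ⟪X' - t • V, V - Θ⟫ + (∫ s in (0:ℝ)..t, s ^ 2 * sig s) * ‖V - Θ‖ ^ 2) / (4 * ((∫ s in (0:ℝ)..t, sig s) * (∫ s in (0:ℝ)..t, s ^ 2 * sig s) - (∫ s in (0:ℝ)..t, s * sig s) ^ 2))) * (-(2 * (∫ s in (0:ℝ)..t, sig s) * ((X' - t • V) i) + 2 * (∫ s in (0:ℝ)..t, s * sig s) * ((V - Θ) i)) / (4 * ((∫ s in (0:ℝ)..t, sig s) * (∫ s in (0:ℝ)..t, s ^ 2 * sig s) - (∫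 s in (0:ℝ)..t, s * sig s) ^ 2))) := by
    intro i
    rw [hfun2 i]
    exact deriv_quadExp (Real.exp (-(∫ s in (0:ℝ)..t, lam s)) * ((4 * Real.pi * Real.sqrt ((∫ s in (0:ℝ)..t, sig s) * (∫ s in (0:ℝ)..t, s ^ 2 * sig s) - (∫ s in (0:ℝ)..t, s * sig s) ^ 2)) ^ (n - 1))⁻¹) (∫ s in (0:ℝ)..t, sig s) (2 * (∫ s in (0:ℝ)..t, sig s) * ((X' - t • V) i) + 2 * (∫ s in (0:ℝ)..t, s * sig s) * ((V - Θ) i)) ((∫ s in (0:ℝ)..t, sig s) * ‖X' - t • V‖ ^ 2 + 2 * (∫ s in (0:ℝ)..t, s * sig s) * ⟪X' - t • V, V - Θ⟫ + (∫ s in (0:ℝ)..t, s ^ 2 * sig s) * ‖V - Θ‖ ^ 2) (4 * ((∫ s in (0:ℝ)..t, sig s) * (∫ s in (0:ℝ)..t, s ^ 2 * sig s) - (∫ s in (0:ℝ)..t, s * sig s) ^ 2))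
  have hd3 : ∀ i : Fin (n - 1),
      iteratedDeriv 2 (fun s : ℝ => pencilBeam n sig lam Θ X' t (V + s • EuclideanSpace.single i 1)) 0
        = (Real.exp (-(∫ s in (0:ℝ)..t, lam s)) * ((4 * Real.pi * Real.sqrt ((∫ s in (0:ℝ)..t, sig s) * (∫ s in (0:ℝ)..t, s ^ 2 * sig s) - (∫ s in (0:ℝ)..t, s * sig s) ^ 2)) ^ (n - 1))⁻¹) * Real.exp (-((∫ s in (0:ℝ)..t, sig s) * ‖X' - t • V‖ ^ 2 + 2 * (∫ s in (0:ℝ)..t, s * sig s) * ⟪X' - t • V, V - Θ⟫ + (∫ s in (0:ℝ)..t, s ^ 2 * sig s) * ‖V - Θ‖ ^ 2) / (4 * ((∫ s in (0:ℝ)..t, sig s) * (∫ s in (0:ℝ)..t, s ^ 2 * sig s) - (∫ s in (0:ℝ)..t, s * sig s) ^ 2))) * (((2 * (∫ s in (0:ℝ)..t, s * sig s) - 2 * (∫ s in (0:ℝ)..t, sig s) * t) * ((X' - t • V) i) + (2 * (∫ s in (0:ℝ)..t, s ^ 2 * sig s) - 2 * (∫ s in (0:ℝ)..t, s * sig s)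 * t) * ((V - Θ) i)) ^ 2 / (4 * ((∫ s in (0:ℝ)..t, sig s) * (∫ s in (0:ℝ)..t, s ^ 2 * sig s) - (∫ s in (0:ℝ)..t, s * sig s) ^ 2)) ^ 2 - 2 * ((∫ s in (0:ℝ)..t, sig s) * t ^ 2 - 2 * (∫ s in (0:ℝ)..t, s * sig s) * t + (∫ s in (0:ℝ)..t, s ^ 2 * sig s)) / (4 * ((∫ s in (0:ℝ)..t, sig s) * (∫ s in (0:ℝ)..t, s ^ 2 * sig s) - (∫ s in (0:ℝ)..t, s * sig s) ^ 2))) := by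
    intro i
    rw [hfun3 i]
    exact iteratedDeriv_two_quadExp (Real.exp (-(∫ s in (0:ℝ)..t, lam s)) * ((4 * Real.pi * Real.sqrt ((∫ s in (0:ℝ)..t, sig s) * (∫ s in (0:ℝ)..t, s ^ 2 * sig s) - (∫ s in (0:ℝ)..t, s * sig s) ^ 2)) ^ (n - 1))⁻¹) ((∫ s in (0:ℝ)..t, sig s) * t ^ 2 - 2 * (∫ s in (0:ℝ)..t, s * sig s) * t + (∫ s in (0:ℝ)..t, s ^ 2 * sig s)) ((2 * (∫ s in (0:ℝ)..t, s * sig s) - 2 * (∫ s in (0:ℝ)..t, sig s) * t) * ((X' - t • V) i) + (2 * (∫ s in (0:ℝ)..t, s ^ 2 * sig s) - 2 * (∫ s in (0:ℝ)..t, s * sig s) * t) * ((V - Θ) i)) ((∫ s in (0:ℝ)..t, sig s) * ‖X' - t • V‖ ^ 2 + 2 * (∫ s in (0:ℝ)..t, s * sig s) * ⟪X' - t • V, V - Θ⟫ + (∫ s in (0:ℝ)..t, s ^ 2 * sig s) * ‖V - Θ‖ ^ 2) (4 * ((∫ s in (0:ℝ)..t, sig s) * (∫ s in (0:ℝ)..t,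 s ^ 2 * sig s) - (∫ s in (0:ℝ)..t, s * sig s) ^ 2))
  have hU : pencilBeam n sig lam Θ X' t V = (Real.exp (-(∫ s in (0:ℝ)..t, lam s)) * ((4 * Real.pi * Real.sqrt ((∫ s in (0:ℝ)..t, sig s) * (∫ s in (0:ℝ)..t, s ^ 2 * sig s) - (∫ s in (0:ℝ)..t, s * sig s) ^ 2)) ^ (n - 1))⁻¹) * Real.exp (-((∫ s in (0:ℝ)..t, sig s) * ‖X' - t • V‖ ^ 2 + 2 * (∫ s in (0:ℝ)..t, s * sig s) * ⟪X' - t • V, V - Θ⟫ + (∫ s in (0:ℝ)..t, s ^ 2 * sig s) * ‖V - Θ‖ ^ 2) / (4 * ((∫ s in (0:ℝ)..t, sig s) * (∫ s in (0:ℝ)..t, s ^ 2 * sig s) - (∫ s in (0:ℝ)..t, s * sig s) ^ 2))) := by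
    simp only [pencilBeam, Gkernel]
    rw [← mul_assoc]
  -- summing the spatial derivatives
  have hS2 : ∑ i : Fin (n - 1), V i *
        deriv (fun s : ℝ => pencilBeam n sig lam Θ (X' + s • EuclideanSpace.single i 1) t V) 0
      = (Real.exp (-(∫ s in (0:ℝ)..t, lam s)) * ((4 * Real.pi * Real.sqrt ((∫ s in (0:ℝ)..t, sig s) * (∫ s in (0:ℝ)..t, s ^ 2 * sig s) - (∫ s in (0:ℝ)..t, s * sig s) ^ 2)) ^ (n - 1))⁻¹) * Real.exp (-((∫ s in (0:ℝ)..t, sig s) * ‖X' - t • V‖ ^ 2 + 2 * (∫ s in (0:ℝ)..t, s * sig s) * ⟪X' - t • V, V - Θ⟫ + (∫ s in (0:ℝ)..t, s ^ 2 * sig s) * ‖V - Θ‖ ^ 2) / (4 * ((∫ s in (0:ℝ)..t, sig s) * (∫ s in (0:ℝ)..t, s ^ 2 * sig s) - (∫ s in (0:ℝ)..t, s * sig s) ^ 2))) * (-(2 * (∫ s in (0:ℝ)..t, sig s) * (∑ i : Fin (n - 1), (X' - t • V) i * V i)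
          + 2 * (∫ s in (0:ℝ)..t, s * sig s) * (∑ i : Fin (n - 1), (V - Θ) i * V i)) / (4 * ((∫ s in (0:ℝ)..t, sig s) * (∫ s in (0:ℝ)..t, s ^ 2 * sig s) - (∫ s in (0:ℝ)..t, s * sig s) ^ 2))) := by
    calc ∑ i : Fin (n - 1), V i *
        deriv (fun s : ℝ => pencilBeam n sig lam Θ (X' + s • EuclideanSpace.single i 1) t V) 0
        = ∑ i : Fin (n - 1), ((Real.exp (-(∫ s in (0:ℝ)..t, lam s)) * ((4 * Real.pi * Real.sqrt ((∫ s in (0:ℝ)..t, sig s) * (∫ s in (0:ℝ)..t, s ^ 2 * sig s) - (∫ s in (0:ℝ)..t, s * sig s) ^ 2)) ^ (n - 1))⁻¹) * Real.exp (-((∫ s in (0:ℝ)..t, sig s) * ‖X' - t • V‖ ^ 2 + 2 * (∫ s in (0:ℝ)..t, s * sig s) * ⟪X' - t • V, V - Θ⟫ + (∫ s in (0:ℝ)..t, s ^ 2 * sig s) * ‖V - Θ‖ ^ 2) / (4 * ((∫ s in (0:ℝ)..t, sig s) * (∫ s in (0:ℝ)..t, s ^ 2 * sig s) - (∫ s in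 (0:ℝ)..t, s * sig s) ^ 2))) * (-(2 * (∫ s in (0:ℝ)..t, sig s)) / (4 * ((∫ s in (0:ℝ)..t, sig s) * (∫ s in (0:ℝ)..t, s ^ 2 * sig s) - (∫ s in (0:ℝ)..t, s * sig s) ^ 2))) * ((X' - t • V) i * V i)
            + (Real.exp (-(∫ s in (0:ℝ)..t, lam s)) * ((4 * Real.pi * Real.sqrt ((∫ s in (0:ℝ)..t, sig s) * (∫ s in (0:ℝ)..t, s ^ 2 * sig s) - (∫ s in (0:ℝ)..t, s * sig s) ^ 2)) ^ (n - 1))⁻¹) * Real.exp (-((∫ s in (0:ℝ)..t, sig s) * ‖X' - t • V‖ ^ 2 + 2 * (∫ s in (0:ℝ)..t, s * sig s) * ⟪X' - t • V, V - Θ⟫ + (∫ s in (0:ℝ)..t, s ^ 2 * sig s) * ‖V - Θ‖ ^ 2) / (4 * ((∫ s in (0:ℝ)..t, sig s) * (∫ s in (0:ℝ)..t, s ^ 2 * sig s) - (∫ s in (0:ℝ)..t, s * sig s) ^ 2))) * (-(2 * (∫ s in (0:ℝ)..t, s * sig s)) / (4 * ((∫ s in (0:ℝ)..t, sig s) * (∫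 s in (0:ℝ)..t, s ^ 2 * sig s) - (∫ s in (0:ℝ)..t, s * sig s) ^ 2))) * ((V - Θ) i * V i)) :=
          Finset.sum_congr rfl (fun i _ => by rw [hd2 i]; ring)
      _ = _ := by
          rw [Finset.sum_add_distrib, ← Finset.mul_sum, ← Finset.mul_sum]
          ring
  -- summing the velocity second derivatives
  have hS3 : ∑ i : Fin (n - 1),
        iteratedDeriv 2 (fun s : ℝ => pencilBeam n sig lam Θ X' t (V + s • EuclideanSpace.single i 1)) 0
      = (Real.exp (-(∫ s in (0:ℝ)..t, lam s)) * ((4 * Real.pi * Real.sqrt ((∫ s in (0:ℝ)..t, sig s) * (∫ s in (0:ℝ)..t, s ^ 2 * sig s) - (∫ s in (0:ℝ)..t, s * sig s) ^ 2)) ^ (n - 1))⁻¹) * Real.exp (-((∫ s in (0:ℝ)..t, sig s) * ‖X' - t • V‖ ^ 2 + 2 * (∫ s in (0:ℝ)..t, s * sig s) * ⟪X' - t • V, V - Θ⟫ + (∫ s in (0:ℝ)..t, s ^ 2 * sig s) * ‖V - Θ‖ ^ 2) / (4 * ((∫ s in (0:ℝ)..t, sig s) * (∫ s in (0:ℝ)..t,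 s ^ 2 * sig s) - (∫ s in (0:ℝ)..t, s * sig s) ^ 2))) * (((2 * (∫ s in (0:ℝ)..t, s * sig s) - 2 * (∫ s in (0:ℝ)..t, sig s) * t) ^ 2 * (∑ i : Fin (n - 1), (X' - t • V) i * (X' - t • V) i)
            + 2 * (2 * (∫ s in (0:ℝ)..t, s * sig s) - 2 * (∫ s in (0:ℝ)..t, sig s) * t) * (2 * (∫ s in (0:ℝ)..t, s ^ 2 * sig s) - 2 * (∫ s in (0:ℝ)..t, s * sig s) * t) * (∑ i : Fin (n - 1), (X' - t • V) i * (V - Θ) i)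
            + (2 * (∫ s in (0:ℝ)..t, s ^ 2 * sig s) - 2 * (∫ s in (0:ℝ)..t, s * sig s) * t) ^ 2 * (∑ i : Fin (n - 1), (V - Θ) i * (V - Θ) i)) / (4 * ((∫ s in (0:ℝ)..t, sig s) * (∫ s in (0:ℝ)..t, s ^ 2 * sig s) - (∫ s in (0:ℝ)..t, s * sig s) ^ 2)) ^ 2
          - ((n - 1 : ℕ) : ℝ) * (2 * ((∫ s in (0:ℝ)..t, sig s) * t ^ 2 - 2 * (∫ s in (0:ℝ)..t, s * sig s) * t + (∫ s in (0:ℝ)..t, s ^ 2 * sig s)) / (4 * ((∫ s in (0:ℝ)..t, sig s) * (∫ s in (0:ℝ)..t, s ^ 2 * sig s) - (∫ s in (0:ℝ)..t, s * sig s) ^ 2)))) := by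
    calc ∑ i : Fin (n - 1),
        iteratedDeriv 2 (fun s : ℝ => pencilBeam n sig lam Θ X' t (V + s • EuclideanSpace.single i 1)) 0
        = ∑ i : Fin (n - 1), ((Real.exp (-(∫ s in (0:ℝ)..t, lam s)) * ((4 * Real.pi * Real.sqrt ((∫ s in (0:ℝ)..t, sig s) * (∫ s in (0:ℝ)..t, s ^ 2 * sig s) - (∫ s in (0:ℝ)..t, s * sig s) ^ 2)) ^ (n - 1))⁻¹) * Real.exp (-((∫ s in (0:ℝ)..t, sig s) * ‖X' - t • V‖ ^ 2 + 2 * (∫ s in (0:ℝ)..t, s * sig s) * ⟪X' - t • V, V - Θ⟫ + (∫ s in (0:ℝ)..t, s ^ 2 * sig s) * ‖V - Θ‖ ^ 2) / (4 * ((∫ s in (0:ℝ)..t, sig s) * (∫ s in (0:ℝ)..t, s ^ 2 * sig s) - (∫ s in (0:ℝ)..t, s * sig s) ^ 2))) * ((2 * (∫ s in (0:ℝ)..t, s * sig s) - 2 * (∫ s in (0:ℝ)..t, sig s) * t) ^ 2 / (4 * ((∫ s in (0:ℝ)..t, sig s) * (∫ s in (0:ℝ)..t, s ^ 2 * sig s)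 - (∫ s in (0:ℝ)..t, s * sig s) ^ 2)) ^ 2) * ((X' - t • V) i * (X' - t • V) i)
            + (Real.exp (-(∫ s in (0:ℝ)..t, lam s)) * ((4 * Real.pi * Real.sqrt ((∫ s in (0:ℝ)..t, sig s) * (∫ s in (0:ℝ)..t, s ^ 2 * sig s) - (∫ s in (0:ℝ)..t, s * sig s) ^ 2)) ^ (n - 1))⁻¹) * Real.exp (-((∫ s in (0:ℝ)..t, sig s) * ‖X' - t • V‖ ^ 2 + 2 * (∫ s in (0:ℝ)..t, s * sig s) * ⟪X' - t • V, V - Θ⟫ + (∫ s in (0:ℝ)..t, s ^ 2 * sig s) * ‖V - Θ‖ ^ 2) / (4 * ((∫ s in (0:ℝ)..t, sig s) * (∫ s in (0:ℝ)..t, s ^ 2 * sig s) - (∫ s in (0:ℝ)..t, s * sig s) ^ 2))) * (2 * (2 * (∫ s in (0:ℝ)..t, s * sig s) - 2 * (∫ s in (0:ℝ)..t, sig s) * t) * (2 * (∫ s in (0:ℝ)..t, s ^ 2 * sig s) - 2 * (∫ s in (0:ℝ)..t, s * sig s) * t) / (4 * ((∫ s in (0:ℝ)..t, sig s) * (∫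 s in (0:ℝ)..t, s ^ 2 * sig s) - (∫ s in (0:ℝ)..t, s * sig s) ^ 2)) ^ 2) * ((X' - t • V) i * (V - Θ) i)
            + (Real.exp (-(∫ s in (0:ℝ)..t, lam s)) * ((4 * Real.pi * Real.sqrt ((∫ s in (0:ℝ)..t, sig s) * (∫ s in (0:ℝ)..t, s ^ 2 * sig s) - (∫ s in (0:ℝ)..t, s * sig s) ^ 2)) ^ (n - 1))⁻¹) * Real.exp (-((∫ s in (0:ℝ)..t, sig s) * ‖X' - t • V‖ ^ 2 + 2 * (∫ s in (0:ℝ)..t, s * sig s) * ⟪X' - t • V, V - Θ⟫ + (∫ s in (0:ℝ)..t, s ^ 2 * sig s) * ‖V - Θ‖ ^ 2) / (4 * ((∫ s in (0:ℝ)..t, sig s) * (∫ s in (0:ℝ)..t, s ^ 2 * sig s) - (∫ s in (0:ℝ)..t, s * sig s) ^ 2))) * ((2 * (∫ s in (0:ℝ)..t, s ^ 2 * sig s) - 2 * (∫ s in (0:ℝ)..t, s * sig s) * t) ^ 2 / (4 * ((∫ s in (0:ℝ)..t, sig s) * (∫ s in (0:ℝ)..t, s ^ 2 * sig s) - (∫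 s in (0:ℝ)..t, s * sig s) ^ 2)) ^ 2) * ((V - Θ) i * (V - Θ) i)
            + (Real.exp (-(∫ s in (0:ℝ)..t, lam s)) * ((4 * Real.pi * Real.sqrt ((∫ s in (0:ℝ)..t, sig s) * (∫ s in (0:ℝ)..t, s ^ 2 * sig s) - (∫ s in (0:ℝ)..t, s * sig s) ^ 2)) ^ (n - 1))⁻¹) * Real.exp (-((∫ s in (0:ℝ)..t, sig s) * ‖X' - t • V‖ ^ 2 + 2 * (∫ s in (0:ℝ)..t, s * sig s) * ⟪X' - t • V, V - Θ⟫ + (∫ s in (0:ℝ)..t, s ^ 2 * sig s) * ‖V - Θ‖ ^ 2) / (4 * ((∫ s in (0:ℝ)..t, sig s) * (∫ s in (0:ℝ)..t, s ^ 2 * sig s) - (∫ s in (0:ℝ)..t, s * sig s) ^ 2))) * (-(2 * ((∫ s in (0:ℝ)..t, sig s) * t ^ 2 - 2 * (∫ s in (0:ℝ)..t, s * sig s) * t + (∫ s in (0:ℝ)..t, s ^ 2 * sig s))) / (4 * ((∫ s in (0:ℝ)..t, sig s) * (∫ s in (0:ℝ)..t, s ^ 2 * sig s) - (∫ s in (0:ℝ)..t,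 s * sig s) ^ 2)))) :=
          Finset.sum_congr rfl (fun i _ => by rw [hd3 i]; ring)
      _ = _ := by
          rw [Finset.sum_add_distrib, Finset.sum_add_distrib, Finset.sum_add_distrib,
            ← Finset.mul_sum, ← Finset.mul_sum, ← Finset.mul_sum, Finset.sum_const,
            Finset.card_univ, Fintype.card_fin, nsmul_eq_mul]
          ring
  -- coordinate sums in terms of inner products
  have hSxx : (∑ i : Fin (n - 1), (X' - t • V) i * (X' - t • V) i)
      = ‖X'‖ ^ 2 - 2 * ⟪X', V⟫ * t + ‖V‖ ^ 2 * t ^ 2 := by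
    have h1 : (∑ i : Fin (n - 1), (X' - t • V) i * (X' - t • V) i) = ⟪X' - t • V, X' - t • V⟫ := by
      simp only [PiLp.inner_apply, RCLike.inner_apply, conj_trivial, mul_comm]
    rw [h1, real_inner_self_eq_norm_sq, norm_sub_sq_real, real_inner_smul_right, norm_smul]
    simp only [Real.norm_eq_abs, mul_pow, sq_abs]
    ring
  have hSxw : (∑ i : Fin (n - 1), (X' - t • V) i * (V - Θ) i)
      = ⟪X', V - Θ⟫ - ⟪V, V - Θ⟫ * t := by
    have h1 : (∑ i : Fin (n - 1), (X' - t • V) i * (V - Θ) i) = ⟪X' - t • V, V - Θ⟫ := by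
      simp only [PiLp.inner_apply, RCLike.inner_apply, conj_trivial, mul_comm]
    rw [h1, inner_sub_left, real_inner_smul_left]
    ring
  have hSww : (∑ i : Fin (n - 1), (V - Θ) i * (V - Θ) i) = ‖V - Θ‖ ^ 2 := by
    have h1 : (∑ i : Fin (n - 1), (V - Θ) i * (V - Θ) i) = ⟪V - Θ, V - Θ⟫ := by
      simp only [PiLp.inner_apply, RCLike.inner_apply, conj_trivial, mul_comm]
    rw [h1, real_inner_self_eq_norm_sq]
  have hSxv : (∑ i : Fin (n - 1), (X' - t • V) i * V i) = ⟪X', V⟫ - ‖V‖ ^ 2 * t := by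
    have h1 : (∑ i : Fin (n - 1), (X' - t • V) i * V i) = ⟪X' - t • V, V⟫ := by
      simp only [PiLp.inner_apply, RCLike.inner_apply, conj_trivial, mul_comm]
    rw [h1, inner_sub_left, real_inner_smul_left, real_inner_self_eq_norm_sq]
    ring
  have hSwv : (∑ i : Fin (n - 1), (V - Θ) i * V i) = ⟪V, V - Θ⟫ := by
    have h1 : (∑ i : Fin (n - 1), (V - Θ) i * V i) = ⟪V - Θ, V⟫ := by
      simp only [PiLp.inner_apply, RCLike.inner_apply, conj_trivial, mul_comm]
    rw [h1, real_inner_comm]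
  -- final assembly
  rw [hT1, hS2, hS3, hU, hSxx, hSxw, hSww, hSxv, hSwv]
  field_simp
  ring
end

section
/- Let n ≥ 2, let σ̃ : [0,∞) → ℝ be continuous with σ̃(s) ≥ σ₀ > 0, and let λ̃ : [0,∞) → ℝ be continuous with λ̃(s) ≥ λ₀ > 0. For 0 ≤ r < t set a_{r,t} = ∫_r^t σ̃(s) ds, b_{r,t} = ∫_r^t s σ̃(s) ds, c_{r,t} = ∫_r^t s² σ̃(s) ds, and let H₃(·,·; r,t) = G_{a_{r,t}, b_{r,t}, c_{r,t}}. Let Ψ : ℝ^{n−1} × [0,∞) × ℝ^{n−1} → ℝ be continuous with compact support and Lipschitz in Z = (X',V) uniformly in t: |Ψ(X'₁,t,V₁) − Ψ(X'₂,t,V₂)| ≤ L·|(X'₁,V₁) − (X'₂,V₂)| for all t ≥ 0. Define W(X', r, V) = ∫_r^∞ exp(−∫_r^t λ̃(s) ds) · ( ∫_{ℝ^{n−1}}∫_{ℝ^{n−1}} H₃(X̃, Ṽ; r, t) · Ψ(X' − X̃ + (r−t)V + tṼ, t, V − Ṽ) dX̃ dṼ ) dt. Then the integrals defining W converge absolutely,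 and there exists a constant C > 0, depending only on n and λ₀, such that for all Z₁ = (X'₁,V₁), Z₂ = (X'₂,V₂) ∈ ℝ^{2(n−1)} and all r ≥ 0, |W(X'₁, r, V₁) − W(X'₂, r, V₂)| ≤ C·L·|Z₁ − Z₂|. -/
open MeasureTheory Real
open scoped RealInnerProductSpace

/-- The kernel `H₃(·,·; r,t) = G_{a_{r,t},b_{r,t},c_{r,t}}` with
`a_{r,t} = ∫_r^t σ̃`, `b_{r,t} = ∫_r^t s σ̃(s) ds`, `c_{r,t} = ∫_r^t s² σ̃(s) ds`. -/
noncomputable def H3kernel (n : ℕ) (sig : ℝ → ℝ) (r t : ℝ)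
    (X V : EuclideanSpace ℝ (Fin (n - 1))) : ℝ :=
  Gkernel n (∫ s in r..t, sig s) (∫ s in r..t, s * sig s) (∫ s in r..t, s ^ 2 * sig s) X V

/-- The explicit solution `W` of the backward Fermi pencil-beam equation with source `Ψ`
and vanishing condition at infinity. -/
noncomputable def Wsol (n : ℕ) (sig lam : ℝ → ℝ)
    (Ψ : EuclideanSpace ℝ (Fin (n - 1)) → ℝ → EuclideanSpace ℝ (Fin (n - 1)) → ℝ)
    (X' : EuclideanSpace ℝ (Fin (n - 1))) (r : ℝ)
    (V : EuclideanSpace ℝ (Fin (n - 1))) : ℝ :=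
  ∫ t in Set.Ioi r, Real.exp (-(∫ s in r..t, lam s)) *
    ∫ p : EuclideanSpace ℝ (Fin (n - 1)) × EuclideanSpace ℝ (Fin (n - 1)),
      H3kernel n sig r t p.1 p.2 *
        Ψ (X' - p.1 + (r - t) • V + t • p.2) t (V - p.2)

section aux

variable {k : ℕ}
local notation "E" => EuclideanSpace ℝ (Fin k)

lemma integrable_gauss {b : ℝ} (hb : 0 < b) :
    Integrable (fun v : E => rexp (-(b * ‖v‖ ^ 2))) := by
  have h := (GaussianFourier.integrable_cexp_neg_mul_sq_norm_add
    (V := E) (b := (b : ℂ)) (by simpa using hb) 0 0).norm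
  refine h.congr ?_
  filter_upwards with v
  simp [Complex.norm_exp]
  left; norm_cast

lemma integral_gauss {b : ℝ} (hb : 0 < b) :
    ∫ v : E, rexp (-(b * ‖v‖ ^ 2)) = (π / b) ^ ((k : ℝ) / 2) := by
  simpa [neg_mul, finrank_euclideanSpace_fin] using
    GaussianFourier.integral_rexp_neg_mul_sq_norm (V := E) hb

lemma integrable_gauss_shear {α β : ℝ} (hα : 0 < α) (hβ : 0 < β) (c : ℝ) :
    Integrable (fun p : E × E =>
      rexp (-(α * ‖p.1 + c • p.2‖ ^ 2)) * rexp (-(β * ‖p.2‖ ^ 2))) := by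
  rw [Measure.volume_eq_prod]
  have hm : AEStronglyMeasurable (fun p : E × E =>
      rexp (-(α * ‖p.1 + c • p.2‖ ^ 2)) * rexp (-(β * ‖p.2‖ ^ 2)))
      ((volume : Measure E).prod volume) := by
    apply Continuous.aestronglyMeasurable; fun_prop
  rw [integrable_prod_iff' hm]
  constructor
  · filter_upwards with V
    exact ((integrable_gauss hα).comp_add_right (c • V)).mul_const _
  · have heq : (fun V : E => ∫ X : E, ‖rexp (-(α * ‖X + c • V‖ ^ 2)) * rexp (-(β * ‖V‖ ^ 2))‖)
        = fun V : E => (π / α) ^ ((k : ℝ) / 2) * rexp (-(β * ‖V‖ ^ 2)) := by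
      funext V
      have h1 : ∀ X : E, ‖rexp (-(α * ‖X + c • V‖ ^ 2)) * rexp (-(β * ‖V‖ ^ 2))‖
          = rexp (-(α * ‖X + c • V‖ ^ 2)) * rexp (-(β * ‖V‖ ^ 2)) := fun X => by
        rw [norm_mul]; simp [abs_of_nonneg (Real.exp_nonneg _)]
      simp_rw [h1, integral_mul_const _ _,
        integral_add_right_eq_self (μ := (volume : Measure E))
          (fun X : E => rexp (-(α * ‖X‖ ^ 2))) (c • V), integral_gauss hα]
    rw [heq]
    exact (integrable_gauss hβ).const_mul _

lemma integral_gauss_shear {α β : ℝ} (hα : 0 < α) (hβ : 0 < β) (c : ℝ) :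
    ∫ p : E × E, rexp (-(α * ‖p.1 + c • p.2‖ ^ 2)) * rexp (-(β * ‖p.2‖ ^ 2))
      = (π / α) ^ ((k : ℝ) / 2) * (π / β) ^ ((k : ℝ) / 2) := by
  have hI := integrable_gauss_shear (k := k) hα hβ c
  rw [Measure.volume_eq_prod] at hI ⊢
  rw [MeasureTheory.integral_prod _ hI]
  rw [integral_integral_swap (by exact hI)]
  have : ∀ V : E, ∫ X : E, rexp (-(α * ‖X + c • V‖ ^ 2)) * rexp (-(β * ‖V‖ ^ 2))
      = (π / α) ^ ((k : ℝ) / 2) * rexp (-(β * ‖V‖ ^ 2)) := fun V => by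
    rw [integral_mul_const _ _,
      integral_add_right_eq_self (μ := (volume : Measure E))
        (fun X : E => rexp (-(α * ‖X‖ ^ 2))) (c • V), integral_gauss hα]
  simp_rw [this]
  rw [MeasureTheory.integral_const_mul, integral_gauss hβ]

end aux

lemma Gkernel_eq (n : ℕ) {a b c : ℝ} (ha : 0 < a) (hD : 0 < a * c - b ^ 2) :
    (fun p : EuclideanSpace ℝ (Fin (n-1)) × EuclideanSpace ℝ (Fin (n-1)) =>
        Gkernel n a b c p.1 p.2)
      = fun p => ((4 * π * Real.sqrt (a * c - b ^ 2)) ^ (n - 1))⁻¹ *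
        (rexp (-(a / (4 * (a * c - b ^ 2)) * ‖p.1 + (b / a) • p.2‖ ^ 2)) *
          rexp (-(1 / (4 * a) * ‖p.2‖ ^ 2))) := by
  funext p
  rw [Gkernel, ← Real.exp_add]
  congr 1
  have hns : ‖p.1 + (b / a) • p.2‖ ^ 2
      = ‖p.1‖ ^ 2 + 2 * ((b / a) * ⟪p.1, p.2⟫) + (b / a) ^ 2 * ‖p.2‖ ^ 2 := by
    rw [norm_add_sq_real, real_inner_smul_right, norm_smul]
    simp [mul_pow, sq_abs, abs_div, div_pow]
  rw [hns]
  have ha' : a ≠ 0 := ha.ne'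
  have hD' : a * c - b ^ 2 ≠ 0 := hD.ne'
  congr 1
  field_simp
  ring

lemma Gkernel_integrable (n : ℕ) {a b c : ℝ} (ha : 0 < a) (hD : 0 < a * c - b ^ 2) :
    Integrable (fun p : EuclideanSpace ℝ (Fin (n-1)) × EuclideanSpace ℝ (Fin (n-1)) =>
      Gkernel n a b c p.1 p.2) := by
  rw [Gkernel_eq n ha hD]
  exact (integrable_gauss_shear (k := n-1) (by positivity) (by positivity) (b / a)).const_mul _

lemma Gkernel_integral (n : ℕ) {a b c : ℝ} (ha : 0 < a) (hD : 0 < a * c - b ^ 2) :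
    ∫ p : EuclideanSpace ℝ (Fin (n-1)) × EuclideanSpace ℝ (Fin (n-1)),
      Gkernel n a b c p.1 p.2 = 1 := by
  rw [Gkernel_eq n ha hD, MeasureTheory.integral_const_mul,
    integral_gauss_shear (k := n-1) (by positivity) (by positivity) (b / a)]
  set D := a * c - b ^ 2 with hDdef
  have hsq : 0 < Real.sqrt D := Real.sqrt_pos.mpr hD
  set P := 4 * π * Real.sqrt D with hP
  have hPpos : 0 < P := by positivity
  have h1 : π / (a / (4 * D)) * (π / (1 / (4 * a))) = P ^ 2 := by
    have hDs : Real.sqrt D ^ 2 = D := Real.sq_sqrt hD.le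
    have hP2 : P ^ 2 = 16 * π ^ 2 * D := by rw [hP, mul_pow, mul_pow, hDs]; ring
    rw [hP2]
    field_simp
    ring
  have h2 : (π / (a / (4 * D))) ^ ((n - 1 : ℕ) / 2 : ℝ) * (π / (1 / (4 * a))) ^ ((n - 1 : ℕ) / 2 : ℝ)
      = P ^ (n - 1 : ℕ) := by
    rw [← Real.mul_rpow (by positivity) (by positivity), h1]
    rw [← Real.rpow_natCast P 2, ← Real.rpow_mul hPpos.le, ← Real.rpow_natCast P (n-1)]
    congr 1
    ring
  rw [h2]
  field_simp

lemma contOn_II {f : ℝ → ℝ} (hf : ContinuousOn f (Set.Ici 0)) {x y : ℝ}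
    (hx : 0 ≤ x) (hy : 0 ≤ y) : IntervalIntegrable f volume x y := by
  apply ContinuousOn.intervalIntegrable
  apply hf.mono
  intro z hz
  exact le_trans (le_min hx hy) hz.1

lemma abc_pos {sig : ℝ → ℝ} {σ₀ r t : ℝ} (hσ₀ : 0 < σ₀)
    (hc : ContinuousOn sig (Set.Ici 0)) (hlb : ∀ s, 0 ≤ s → σ₀ ≤ sig s)
    (hr : 0 ≤ r) (hrt : r < t) :
    0 < (∫ s in r..t, sig s) ∧
    0 < (∫ s in r..t, sig s) * (∫ s in r..t, s ^ 2 * sig s) -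
      (∫ s in r..t, s * sig s) ^ 2 := by
  have ht : (0:ℝ) ≤ t := hr.trans hrt.le
  have hcb : ContinuousOn (fun s : ℝ => s * sig s) (Set.Ici 0) := continuousOn_id.mul hc
  have hcc : ContinuousOn (fun s : ℝ => s ^ 2 * sig s) (Set.Ici 0) :=
    (continuousOn_id.pow 2).mul hc
  have hI : IntervalIntegrable sig volume r t := contOn_II hc hr ht
  have hIb : IntervalIntegrable (fun s : ℝ => s * sig s) volume r t := contOn_II hcb hr ht
  have hIc : IntervalIntegrable (fun s : ℝ => s ^ 2 * sig s) volume r t := contOn_II hcc hr ht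
  set a := ∫ s in r..t, sig s with hadef
  set b := ∫ s in r..t, s * sig s with hbdef
  set c := ∫ s in r..t, s ^ 2 * sig s with hcdef
  have ha : 0 < a := by
    have h1 : ∫ s in r..t, σ₀ ≤ a :=
      intervalIntegral.integral_mono_on hrt.le intervalIntegrable_const hI
        (fun s hs => hlb s (hr.trans hs.1))
    rw [intervalIntegral.integral_const, smul_eq_mul] at h1
    nlinarith [sub_pos.mpr hrt]
  refine ⟨ha, ?_⟩
  set m := b / a with hmdef
  have hImm : IntervalIntegrable (fun s : ℝ => sig s * (s - m) ^ 2) volume r t :=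
    contOn_II (hc.mul (((continuousOn_id.sub continuousOn_const).pow 2))) hr ht
  have key1 : ∫ s in r..t, sig s * (s - m) ^ 2 = c - 2 * m * b + m ^ 2 * a := by
    have heq : ∀ s : ℝ, sig s * (s - m) ^ 2
        = (s ^ 2 * sig s - 2 * m * (s * sig s)) + m ^ 2 * sig s := fun s => by ring
    simp_rw [heq]
    rw [intervalIntegral.integral_add (hIc.sub (hIb.const_mul (2*m))) (hI.const_mul (m^2)),
      intervalIntegral.integral_sub hIc (hIb.const_mul (2*m)),
      intervalIntegral.integral_const_mul, intervalIntegral.integral_const_mul]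
  have key2 : σ₀ * (((t-m)^3 - (r-m)^3)/3) ≤ ∫ s in r..t, sig s * (s - m) ^ 2 := by
    have h1 : ∫ s in r..t, σ₀ * (s - m) ^ 2 ≤ ∫ s in r..t, sig s * (s - m) ^ 2 := by
      apply intervalIntegral.integral_mono_on hrt.le _ hImm
      · exact fun s hs => mul_le_mul_of_nonneg_right (hlb s (hr.trans hs.1)) (sq_nonneg _)
      · exact contOn_II (continuousOn_const.mul
          ((continuousOn_id.sub continuousOn_const).pow 2)) hr ht
    have h2 : ∫ s in r..t, σ₀ * (s - m) ^ 2 = σ₀ * (((t-m)^3 - (r-m)^3)/3) := by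
      rw [intervalIntegral.integral_const_mul]
      congr 1
      have h3 : (∫ s in r..t, (s - m) ^ 2) = ∫ s in r-m..t-m, s ^ 2 :=
        intervalIntegral.integral_comp_sub_right (fun s => s ^ 2) m
      rw [h3, integral_pow]
      norm_num
    rw [← h2]; exact h1
  have hpos : 0 < ((t-m)^3 - (r-m)^3)/3 := by
    nlinarith [pow_pos (sub_pos.mpr hrt) 3,
      mul_nonneg (sub_pos.mpr hrt).le (sq_nonneg ((r-m)+(t-r)/2))]
  have hid : a * c - b ^ 2 = a * (c - 2 * m * b + m ^ 2 * a) := by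
    rw [hmdef]; field_simp; ring
  rw [hid]
  have : 0 < c - 2*m*b + m^2*a := lt_of_lt_of_le (by positivity) (key1 ▸ key2)
  exact mul_pos ha this

lemma continuous_Gkernel (n : ℕ) (a b c : ℝ) :
    Continuous (fun p : EuclideanSpace ℝ (Fin (n-1)) × EuclideanSpace ℝ (Fin (n-1)) =>
      Gkernel n a b c p.1 p.2) := by
  unfold Gkernel
  have hin : Continuous (fun p : EuclideanSpace ℝ (Fin (n-1)) × EuclideanSpace ℝ (Fin (n-1)) =>
      (⟪p.1, p.2⟫ : ℝ)) := continuous_fst.inner continuous_snd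
  apply continuous_const.mul
  apply Real.continuous_exp.comp
  apply Continuous.div_const
  exact (((continuous_const.mul ((continuous_norm.comp continuous_fst).pow 2)).add
    ((continuous_const.mul hin))).add
    (continuous_const.mul ((continuous_norm.comp continuous_snd).pow 2))).neg

lemma measurable_Gcomp {n : ℕ} {A B C : ℝ → ℝ} (hA : Measurable A) (hB : Measurable B)
    (hC : Measurable C) :
    Measurable (fun q : ℝ × (EuclideanSpace ℝ (Fin (n-1)) × EuclideanSpace ℝ (Fin (n-1))) =>
      Gkernel n (A q.1) (B q.1) (C q.1) q.2.1 q.2.2) := by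
  unfold Gkernel
  have h1 : Measurable (fun q : ℝ × (EuclideanSpace ℝ (Fin (n-1)) ×
      EuclideanSpace ℝ (Fin (n-1))) => A q.1 * C q.1 - B q.1 ^ 2) := by fun_prop
  have hin : Measurable (fun q : ℝ × (EuclideanSpace ℝ (Fin (n-1)) ×
      EuclideanSpace ℝ (Fin (n-1))) => (⟪q.2.1, q.2.2⟫ : ℝ)) :=
    ((continuous_fst.inner continuous_snd).measurable
      (f := fun p : EuclideanSpace ℝ (Fin (n-1)) × EuclideanSpace ℝ (Fin (n-1)) =>
        (⟪p.1, p.2⟫ : ℝ))).comp measurable_snd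
  have hn1 : Measurable (fun q : ℝ × (EuclideanSpace ℝ (Fin (n-1)) ×
      EuclideanSpace ℝ (Fin (n-1))) => ‖q.2.1‖) := by fun_prop
  have hn2 : Measurable (fun q : ℝ × (EuclideanSpace ℝ (Fin (n-1)) ×
      EuclideanSpace ℝ (Fin (n-1))) => ‖q.2.2‖) := by fun_prop
  apply Measurable.mul
  · exact ((Real.continuous_sqrt.measurable.comp h1).const_mul _ |>.pow_const _).inv
  · apply (Real.continuous_exp.measurable.comp ?_)
    apply Measurable.div ?_ (by fun_prop)
    apply Measurable.neg
    apply Measurable.add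
    apply Measurable.add
    · exact (hA.comp measurable_fst).mul (hn1.pow_const 2)
    · exact ((measurable_const.mul (hB.comp measurable_fst)).mul hin)
    · exact (hC.comp measurable_fst).mul (hn2.pow_const 2)

lemma primitive_mono {f : ℝ → ℝ} {r : ℝ} (hr : 0 ≤ r) (hf : ContinuousOn f (Set.Ici 0))
    (hf0 : ∀ s, 0 ≤ s → 0 ≤ f s) :
    Monotone fun t => ∫ s in r..(max r t), f s := by
  intro t₁ t₂ h
  have h01 : (0:ℝ) ≤ max r t₁ := le_trans hr (le_max_left _ _)
  have h02 : (0:ℝ) ≤ max r t₂ := le_trans hr (le_max_left _ _)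
  have hsplit := intervalIntegral.integral_add_adjacent_intervals
    (contOn_II hf hr h01) (contOn_II hf h01 h02)
  have hnn : 0 ≤ ∫ s in (max r t₁)..(max r t₂), f s := by
    apply intervalIntegral.integral_nonneg (max_le_max le_rfl h)
    exact fun u hu => hf0 u (le_trans h01 hu.1)
  simp only
  linarith

lemma integrableOn_exp_shift {b r : ℝ} (hb : 0 < b) :
    IntegrableOn (fun t => rexp (-(b * (t - r)))) (Set.Ioi r) := by
  have h := (exp_neg_integrableOn_Ioi r hb).const_mul (rexp (b * r))
  refine h.congr (Filter.Eventually.of_forall fun t => ?_)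
  show rexp (b * r) * rexp (-b * t) = rexp (-(b * (t - r)))
  rw [← Real.exp_add]
  ring_nf

lemma integral_exp_shift {b r : ℝ} (hb : 0 < b) :
    ∫ t in Set.Ioi r, rexp (-(b * (t - r))) = 1 / b := by
  have hd : ∀ x ∈ Set.Ici r, HasDerivAt (fun t => -(1/b) * rexp (-(b * (t - r))))
      (rexp (-(b * (x - r)))) x := by
    intro x _
    have h1 : HasDerivAt (fun t : ℝ => -(b * (t - r))) (-b) x := by
      have := (((hasDerivAt_id x).sub_const r).const_mul b).neg
      simp only [mul_one] at this
      exact this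
    have h2 := (h1.exp).const_mul (-(1/b))
    refine h2.congr_deriv ?_
    field_simp
  have htend : Filter.Tendsto (fun t => -(1/b) * rexp (-(b * (t - r)))) Filter.atTop (nhds 0) := by
    have h1 : Filter.Tendsto (fun t : ℝ => b * (t - r)) Filter.atTop Filter.atTop := by
      apply Filter.Tendsto.const_mul_atTop hb
      simpa [sub_eq_add_neg] using
        Filter.tendsto_atTop_add_const_right Filter.atTop (-r) Filter.tendsto_id
    have h2 := Real.tendsto_exp_neg_atTop_nhds_zero.comp h1
    have h3 := (Filter.Tendsto.const_mul (-(1/b)) h2)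
    simpa [Function.comp] using h3
  have := integral_Ioi_of_hasDerivAt_of_tendsto' hd (integrableOn_exp_shift hb) htend
  rw [this]
  simp

lemma H3_nonneg (n : ℕ) (sig : ℝ → ℝ) (r t : ℝ)
    (X V : EuclideanSpace ℝ (Fin (n-1))) : 0 ≤ H3kernel n sig r t X V := by
  unfold H3kernel Gkernel
  positivity

lemma lam_lb {lam : ℝ → ℝ} {lam₀ r t : ℝ} (hlam₀ : 0 < lam₀)
    (hlamc : ContinuousOn lam (Set.Ici 0)) (hlamlb : ∀ s, 0 ≤ s → lam₀ ≤ lam s)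
    (hr : 0 ≤ r) (hrt : r < t) : lam₀ * (t - r) ≤ ∫ s in r..t, lam s := by
  have h1 : ∫ s in r..t, lam₀ ≤ ∫ s in r..t, lam s :=
    intervalIntegral.integral_mono_on hrt.le intervalIntegrable_const
      (contOn_II hlamc hr (hr.trans hrt.le)) (fun s hs => hlamlb s (hr.trans hs.1))
  rw [intervalIntegral.integral_const, smul_eq_mul] at h1
  nlinarith

lemma innerPsi_integrable (n : ℕ) {sig : ℝ → ℝ} {σ₀ : ℝ} (hσ₀ : 0 < σ₀)
    (hsig : ContinuousOn sig (Set.Ici 0)) (hsiglb : ∀ s, 0 ≤ s → σ₀ ≤ sig s)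
    {Ψ : EuclideanSpace ℝ (Fin (n-1)) → ℝ → EuclideanSpace ℝ (Fin (n-1)) → ℝ}
    (hΨc : Continuous (fun z : EuclideanSpace ℝ (Fin (n-1)) × ℝ ×
      EuclideanSpace ℝ (Fin (n-1)) => Ψ z.1 z.2.1 z.2.2))
    {M : ℝ} (hM : ∀ x t v, |Ψ x t v| ≤ M)
    (X' V : EuclideanSpace ℝ (Fin (n-1))) {r t : ℝ} (hr : 0 ≤ r) (hrt : r < t) :
    Integrable (fun p : EuclideanSpace ℝ (Fin (n-1)) × EuclideanSpace ℝ (Fin (n-1)) =>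
      H3kernel n sig r t p.1 p.2 *
        Ψ (X' - p.1 + (r - t) • V + t • p.2) t (V - p.2)) := by
  obtain ⟨ha, hD⟩ := abc_pos hσ₀ hsig hsiglb hr hrt
  have hH3 : Integrable (fun p : EuclideanSpace ℝ (Fin (n-1)) ×
      EuclideanSpace ℝ (Fin (n-1)) => H3kernel n sig r t p.1 p.2) :=
    Gkernel_integrable n ha hD
  apply Integrable.mono' (hH3.const_mul M)
  · have hc : Continuous (fun p : EuclideanSpace ℝ (Fin (n-1)) ×
        EuclideanSpace ℝ (Fin (n-1)) =>
        (X' - p.1 + (r - t) • V + t • p.2, (t, V - p.2)) :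
        _ → EuclideanSpace ℝ (Fin (n-1)) × ℝ × EuclideanSpace ℝ (Fin (n-1))) := by fun_prop
    exact ((continuous_Gkernel n _ _ _).mul (hΨc.comp hc)).aestronglyMeasurable
  · filter_upwards with p
    rw [Real.norm_eq_abs, abs_mul, abs_of_nonneg (H3_nonneg n sig r t p.1 p.2)]
    calc H3kernel n sig r t p.1 p.2 * |Ψ (X' - p.1 + (r - t) • V + t • p.2) t (V - p.2)|
        ≤ H3kernel n sig r t p.1 p.2 * M :=
          mul_le_mul_of_nonneg_left (hM _ _ _) (H3_nonneg n sig r t p.1 p.2)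
      _ = M * H3kernel n sig r t p.1 p.2 := mul_comm _ _

lemma key_integrable (n : ℕ) {sig lam : ℝ → ℝ} {σ₀ lam₀ : ℝ} (hσ₀ : 0 < σ₀) (hlam₀ : 0 < lam₀)
    (hsig : ContinuousOn sig (Set.Ici 0)) (hsiglb : ∀ s, 0 ≤ s → σ₀ ≤ sig s)
    (hlamc : ContinuousOn lam (Set.Ici 0)) (hlamlb : ∀ s, 0 ≤ s → lam₀ ≤ lam s)
    {Ψ : EuclideanSpace ℝ (Fin (n-1)) → ℝ → EuclideanSpace ℝ (Fin (n-1)) → ℝ}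
    (hΨc : Continuous (fun z : EuclideanSpace ℝ (Fin (n-1)) × ℝ ×
      EuclideanSpace ℝ (Fin (n-1)) => Ψ z.1 z.2.1 z.2.2))
    {M : ℝ} (hM : ∀ x t v, |Ψ x t v| ≤ M)
    (X' V : EuclideanSpace ℝ (Fin (n-1))) (r : ℝ) (hr : 0 ≤ r) :
    Integrable (fun q : ℝ × (EuclideanSpace ℝ (Fin (n-1)) × EuclideanSpace ℝ (Fin (n-1))) =>
      Real.exp (-(∫ s in r..q.1, lam s)) * H3kernel n sig r q.1 q.2.1 q.2.2 *
        Ψ (X' - q.2.1 + (r - q.1) • V + q.1 • q.2.2) q.1 (V - q.2.2))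
      ((volume.restrict (Set.Ioi r)).prod volume) := by
  have hM0 : 0 ≤ M := le_trans (abs_nonneg _) (hM 0 0 0)
  -- measurable global version
  have hσnn : ∀ s, 0 ≤ s → 0 ≤ sig s := fun s hs => le_trans hσ₀.le (hsiglb s hs)
  have hAm : Measurable (fun t : ℝ => ∫ s in r..(max r t), sig s) :=
    (primitive_mono hr hsig hσnn).measurable
  have hBm : Measurable (fun t : ℝ => ∫ s in r..(max r t), s * sig s) :=
    (primitive_mono hr (continuousOn_id.mul hsig)
      (fun s hs => mul_nonneg hs (hσnn s hs))).measurable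
  have hCm : Measurable (fun t : ℝ => ∫ s in r..(max r t), s ^ 2 * sig s) :=
    (primitive_mono hr ((continuousOn_id.pow 2).mul hsig)
      (fun s hs => mul_nonneg (sq_nonneg s) (hσnn s hs))).measurable
  have hΛm : Measurable (fun t : ℝ => ∫ s in r..(max r t), lam s) :=
    (primitive_mono hr hlamc (fun s hs => le_trans hlam₀.le (hlamlb s hs))).measurable
  have hΨm : Measurable (fun q : ℝ × (EuclideanSpace ℝ (Fin (n-1)) ×
      EuclideanSpace ℝ (Fin (n-1))) =>
      Ψ (X' - q.2.1 + (r - q.1) • V + q.1 • q.2.2) q.1 (V - q.2.2)) := by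
    have hc : Continuous (fun q : ℝ × (EuclideanSpace ℝ (Fin (n-1)) ×
        EuclideanSpace ℝ (Fin (n-1))) =>
        (X' - q.2.1 + (r - q.1) • V + q.1 • q.2.2, (q.1, V - q.2.2)) :
        _ → EuclideanSpace ℝ (Fin (n-1)) × ℝ × EuclideanSpace ℝ (Fin (n-1))) := by fun_prop
    exact (hΨc.comp hc).measurable
  have hGm : Measurable (fun q : ℝ × (EuclideanSpace ℝ (Fin (n-1)) ×
      EuclideanSpace ℝ (Fin (n-1))) =>
      rexp (-(∫ s in r..(max r q.1), lam s)) *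
        Gkernel n (∫ s in r..(max r q.1), sig s) (∫ s in r..(max r q.1), s * sig s)
          (∫ s in r..(max r q.1), s ^ 2 * sig s) q.2.1 q.2.2 *
        Ψ (X' - q.2.1 + (r - q.1) • V + q.1 • q.2.2) q.1 (V - q.2.2)) := by
    exact ((Real.continuous_exp.measurable.comp ((hΛm.comp measurable_fst).neg)).mul
      (measurable_Gcomp hAm hBm hCm)).mul hΨm
  -- a.e. agreement on the restricted product measure
  have haefst : ∀ᵐ q : ℝ × (EuclideanSpace ℝ (Fin (n-1)) × EuclideanSpace ℝ (Fin (n-1)))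
      ∂((volume.restrict (Set.Ioi r)).prod volume), q.1 ∈ Set.Ioi r := by
    rw [MeasureTheory.ae_iff]
    refine measure_mono_null (t := (Set.Ioi r)ᶜ ×ˢ (Set.univ :
      Set (EuclideanSpace ℝ (Fin (n-1)) × EuclideanSpace ℝ (Fin (n-1)))))
      (fun q hq => ⟨hq, Set.mem_univ _⟩) ?_
    rw [Measure.prod_prod, Measure.restrict_apply (measurableSet_Ioi.compl)]
    have : Set.Iic r ∩ Set.Ioi r = (∅ : Set ℝ) := by
      ext x; simp only [Set.mem_inter_iff, Set.mem_Iic, Set.mem_Ioi, Set.mem_empty_iff_false,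
        iff_false, not_and, not_lt]
      exact fun h => h
    simp [Set.compl_Ioi, this]
  have hmeas : AEStronglyMeasurable
      (fun q : ℝ × (EuclideanSpace ℝ (Fin (n-1)) × EuclideanSpace ℝ (Fin (n-1))) =>
        Real.exp (-(∫ s in r..q.1, lam s)) * H3kernel n sig r q.1 q.2.1 q.2.2 *
          Ψ (X' - q.2.1 + (r - q.1) • V + q.1 • q.2.2) q.1 (V - q.2.2))
      ((volume.restrict (Set.Ioi r)).prod volume) := by
    apply hGm.aestronglyMeasurable.congr
    filter_upwards [haefst] with q hq
    rw [max_eq_right (le_of_lt hq)]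
    rfl
  rw [integrable_prod_iff hmeas]
  constructor
  · filter_upwards [MeasureTheory.ae_restrict_mem measurableSet_Ioi] with t ht
    have h := (innerPsi_integrable n hσ₀ hsig hsiglb hΨc hM X' V hr ht).const_mul
      (Real.exp (-(∫ s in r..t, lam s)))
    refine h.congr (Filter.Eventually.of_forall fun p => ?_)
    simp only [mul_assoc]
  · -- dominate the norm-integral
    apply Integrable.mono' ((integrableOn_exp_shift (r := r) hlam₀).const_mul M)
    · exact hmeas.norm.integral_prod_right'
    · filter_upwards [MeasureTheory.ae_restrict_mem measurableSet_Ioi] with t ht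
      obtain ⟨ha, hD⟩ := abc_pos hσ₀ hsig hsiglb hr ht
      have hone : ∫ p : EuclideanSpace ℝ (Fin (n-1)) × EuclideanSpace ℝ (Fin (n-1)),
          H3kernel n sig r t p.1 p.2 = 1 := Gkernel_integral n ha hD
      have hexp : rexp (-(∫ s in r..t, lam s)) ≤ rexp (-(lam₀ * (t - r))) := by
        apply Real.exp_le_exp.mpr
        have := lam_lb hlam₀ hlamc hlamlb hr ht
        linarith
      have hbd : (∫ p : EuclideanSpace ℝ (Fin (n-1)) × EuclideanSpace ℝ (Fin (n-1)),
          ‖Real.exp (-(∫ s in r..t, lam s)) * H3kernel n sig r t p.1 p.2 *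
            Ψ (X' - p.1 + (r - t) • V + t • p.2) t (V - p.2)‖)
          ≤ M * rexp (-(lam₀ * (t - r))) := by
        have hle : ∀ p : EuclideanSpace ℝ (Fin (n-1)) × EuclideanSpace ℝ (Fin (n-1)),
            ‖Real.exp (-(∫ s in r..t, lam s)) * H3kernel n sig r t p.1 p.2 *
              Ψ (X' - p.1 + (r - t) • V + t • p.2) t (V - p.2)‖
            ≤ (M * rexp (-(lam₀ * (t - r)))) * H3kernel n sig r t p.1 p.2 := by
          intro p
          rw [Real.norm_eq_abs, abs_mul, abs_mul,
            abs_of_pos (Real.exp_pos _), abs_of_nonneg (H3_nonneg n sig r t p.1 p.2)]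
          have h1 : |Ψ (X' - p.1 + (r - t) • V + t • p.2) t (V - p.2)| ≤ M := hM _ _ _
          have h2 := H3_nonneg n sig r t p.1 p.2
          have h3 := (Real.exp_pos (-(∫ s in r..t, lam s))).le
          calc rexp (-(∫ s in r..t, lam s)) * H3kernel n sig r t p.1 p.2 *
                |Ψ (X' - p.1 + (r - t) • V + t • p.2) t (V - p.2)|
              ≤ rexp (-(∫ s in r..t, lam s)) * H3kernel n sig r t p.1 p.2 * M :=
                mul_le_mul_of_nonneg_left h1 (mul_nonneg h3 h2)
            _ ≤ rexp (-(lam₀ * (t - r))) * H3kernel n sig r t p.1 p.2 * M :=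
                mul_le_mul_of_nonneg_right (mul_le_mul_of_nonneg_right hexp h2) hM0
            _ = M * rexp (-(lam₀ * (t - r))) * H3kernel n sig r t p.1 p.2 := by ring
        calc (∫ p : EuclideanSpace ℝ (Fin (n-1)) × EuclideanSpace ℝ (Fin (n-1)),
            ‖Real.exp (-(∫ s in r..t, lam s)) * H3kernel n sig r t p.1 p.2 *
              Ψ (X' - p.1 + (r - t) • V + t • p.2) t (V - p.2)‖)
            ≤ ∫ p : EuclideanSpace ℝ (Fin (n-1)) × EuclideanSpace ℝ (Fin (n-1)),
              (M * rexp (-(lam₀ * (t - r)))) * H3kernel n sig r t p.1 p.2 := by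
              apply integral_mono_of_nonneg
              · filter_upwards with p; exact norm_nonneg _
              · exact (Gkernel_integrable n ha hD).const_mul _
              · filter_upwards with p; exact hle p
          _ = M * rexp (-(lam₀ * (t - r))) := by
              rw [MeasureTheory.integral_const_mul, hone, mul_one]
      rw [Real.norm_eq_abs, abs_of_nonneg (by positivity)]
      exact hbd

lemma exp_decay_ineq {lam₀ u : ℝ} (hlam₀ : 0 < lam₀) (hu : 0 ≤ u) :
    (1 + u) * rexp (-(lam₀ * u)) ≤ (1 + 2/lam₀) * rexp (-(lam₀/2 * u)) := by
  have h3 : 1 + lam₀/2 * u ≤ rexp (lam₀/2 * u) := by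
    linarith [Real.add_one_le_exp (lam₀/2 * u)]
  have hw2 : (2/lam₀) * lam₀ * u = 2 * u := by field_simp
  have h5 : (1 + u) ≤ (1 + 2/lam₀) * rexp (lam₀/2 * u) := by
    have h6 : (1 + 2/lam₀) * (1 + lam₀/2*u) ≤ (1 + 2/lam₀) * rexp (lam₀/2*u) :=
      mul_le_mul_of_nonneg_left h3 (by positivity)
    nlinarith [hw2, h6, div_nonneg (by norm_num : (0:ℝ) ≤ 2) hlam₀.le,
      mul_nonneg hu hlam₀.le]
  have h7 := mul_le_mul_of_nonneg_right h5 (Real.exp_pos (-(lam₀ * u))).le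
  calc (1+u) * rexp (-(lam₀*u)) ≤ ((1 + 2/lam₀) * rexp (lam₀/2*u)) * rexp (-(lam₀*u)) := h7
    _ = (1 + 2/lam₀) * rexp (-(lam₀/2*u)) := by
        rw [mul_assoc, ← Real.exp_add]; congr 2; ring

lemma sqrt_bound {F : Type*} [NormedAddCommGroup F] [NormedSpace ℝ F]
    (x y : F) (c w : ℝ) (hc : |c| ≤ w) :
    Real.sqrt (‖x + c • y‖^2 + ‖y‖^2) ≤ 2 * (1 + w) * Real.sqrt (‖x‖^2 + ‖y‖^2) := by
  have hw : 0 ≤ w := (abs_nonneg c).trans hc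
  set d := Real.sqrt (‖x‖^2 + ‖y‖^2) with hddef
  have hd : 0 ≤ d := Real.sqrt_nonneg _
  have hx : ‖x‖ ≤ d := by
    have h := Real.sqrt_le_sqrt (show ‖x‖^2 ≤ ‖x‖^2 + ‖y‖^2 by nlinarith [sq_nonneg ‖y‖])
    rwa [Real.sqrt_sq (norm_nonneg x)] at h
  have hy : ‖y‖ ≤ d := by
    have h := Real.sqrt_le_sqrt (show ‖y‖^2 ≤ ‖x‖^2 + ‖y‖^2 by nlinarith [sq_nonneg ‖x‖])
    rwa [Real.sqrt_sq (norm_nonneg y)] at h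
  have hA : ‖x + c • y‖ ≤ ‖x‖ + w * ‖y‖ := by
    refine (norm_add_le _ _).trans ?_
    rw [norm_smul, Real.norm_eq_abs]
    have := mul_le_mul_of_nonneg_right hc (norm_nonneg y)
    linarith
  have hstep : Real.sqrt (‖x + c • y‖^2 + ‖y‖^2) ≤ ‖x + c • y‖ + ‖y‖ := by
    have h1 : ‖x + c • y‖^2 + ‖y‖^2 ≤ (‖x + c • y‖ + ‖y‖)^2 := by
      nlinarith [norm_nonneg (x + c • y), norm_nonneg y]
    have h := Real.sqrt_le_sqrt h1
    rwa [Real.sqrt_sq (by positivity)] at h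
  have h2 : w * ‖y‖ ≤ w * d := mul_le_mul_of_nonneg_left hy hw
  nlinarith [hstep, hA, hx, hy, h2, mul_nonneg hw hd]

/-- Lemma 4.3: Lipschitz continuity of the backward pencil-beam solution. The integrals
defining `W` converge absolutely, and there is `C > 0` depending only on `n` and `λ₀` such
that `|W(Z₁,r) − W(Z₂,r)| ≤ C·L·|Z₁ − Z₂|` for every admissible data. -/
theorem backward_pencilBeam_lipschitz
    (n : ℕ) (hn : 2 ≤ n) (lam₀ : ℝ) (hlam₀ : 0 < lam₀) :
    ∃ C > 0, ∀ (sig lam : ℝ → ℝ) (σ₀ : ℝ), 0 < σ₀ →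
      ContinuousOn sig (Set.Ici 0) → (∀ s, 0 ≤ s → σ₀ ≤ sig s) →
      ContinuousOn lam (Set.Ici 0) → (∀ s, 0 ≤ s → lam₀ ≤ lam s) →
      ∀ (Ψ : EuclideanSpace ℝ (Fin (n - 1)) → ℝ → EuclideanSpace ℝ (Fin (n - 1)) → ℝ)
        (L : ℝ),
        Continuous (fun z : EuclideanSpace ℝ (Fin (n - 1)) × ℝ ×
            EuclideanSpace ℝ (Fin (n - 1)) => Ψ z.1 z.2.1 z.2.2) →
        HasCompactSupport (fun z : EuclideanSpace ℝ (Fin (n - 1)) × ℝ ×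
            EuclideanSpace ℝ (Fin (n - 1)) => Ψ z.1 z.2.1 z.2.2) →
        (∀ (X₁ X₂ V₁ V₂ : EuclideanSpace ℝ (Fin (n - 1))) (t : ℝ), 0 ≤ t →
          |Ψ X₁ t V₁ - Ψ X₂ t V₂| ≤ L * Real.sqrt (‖X₁ - X₂‖ ^ 2 + ‖V₁ - V₂‖ ^ 2)) →
        -- absolute convergence of the double integral defining `W`
        (∀ (X' V : EuclideanSpace ℝ (Fin (n - 1))) (r : ℝ), 0 ≤ r →
          MeasureTheory.IntegrableOn
            (fun q : ℝ × (EuclideanSpace ℝ (Fin (n - 1)) ×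
                EuclideanSpace ℝ (Fin (n - 1))) =>
              Real.exp (-(∫ s in r..q.1, lam s)) * H3kernel n sig r q.1 q.2.1 q.2.2 *
                Ψ (X' - q.2.1 + (r - q.1) • V + q.1 • q.2.2) q.1 (V - q.2.2))
            (Set.Ioi r ×ˢ Set.univ) MeasureTheory.volume) ∧
        -- uniform-in-`r` Lipschitz estimate in `Z = (X', V)`
        ∀ (X₁' X₂' V₁ V₂ : EuclideanSpace ℝ (Fin (n - 1))) (r : ℝ), 0 ≤ r →
          |Wsol n sig lam Ψ X₁' r V₁ - Wsol n sig lam Ψ X₂' r V₂|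
            ≤ C * L * Real.sqrt (‖X₁' - X₂'‖ ^ 2 + ‖V₁ - V₂‖ ^ 2) := by
  refine ⟨2 * (1 + 2/lam₀) * (2/lam₀), by positivity, ?_⟩
  intro sig lam σ₀ hσ₀ hsig hsiglb hlamc hlamlb Ψ L hΨc hΨsupp hΨlip
  obtain ⟨M, hMn⟩ := hΨc.bounded_above_of_compact_support hΨsupp
  have hM : ∀ x t v, |Ψ x t v| ≤ M := fun x t v => by
    have := hMn (x, t, v); rwa [Real.norm_eq_abs] at this
  have hL : 0 ≤ L := by
    have h := hΨlip (EuclideanSpace.single (⟨0, by omega⟩ : Fin (n-1)) 1) 0 0 0 0 le_rfl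
    have hn1 : ‖(EuclideanSpace.single (⟨0, by omega⟩ : Fin (n-1)) (1:ℝ)) - 0‖ = 1 := by
      rw [sub_zero, EuclideanSpace.norm_single]; norm_num
    rw [hn1, sub_zero, norm_zero] at h
    norm_num at h
    linarith [abs_nonneg (Ψ (EuclideanSpace.single (⟨0, by omega⟩ : Fin (n-1)) 1) 0 0 - Ψ 0 0 0)]
  have hres : ∀ r : ℝ, (volume : Measure (ℝ × (EuclideanSpace ℝ (Fin (n-1)) ×
      EuclideanSpace ℝ (Fin (n-1))))).restrict (Set.Ioi r ×ˢ Set.univ)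
      = (volume.restrict (Set.Ioi r)).prod volume := by
    intro r
    rw [Measure.volume_eq_prod, ← Measure.prod_restrict, Measure.restrict_univ]
  constructor
  · intro X' V r hr
    rw [MeasureTheory.IntegrableOn, hres r]
    exact key_integrable n hσ₀ hlam₀ hsig hsiglb hlamc hlamlb hΨc hM X' V r hr
  · intro X₁' X₂' V₁ V₂ r hr
    set d := Real.sqrt (‖X₁' - X₂'‖^2 + ‖V₁ - V₂‖^2) with hddef
    have hd0 : 0 ≤ d := Real.sqrt_nonneg _
    have hkey₁ := key_integrable n hσ₀ hlam₀ hsig hsiglb hlamc hlamlb hΨc hM X₁' V₁ r hr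
    have hkey₂ := key_integrable n hσ₀ hlam₀ hsig hsiglb hlamc hlamlb hΨc hM X₂' V₂ r hr
    have hfun : ∀ (X' V : EuclideanSpace ℝ (Fin (n-1))),
        (fun t => ∫ p : EuclideanSpace ℝ (Fin (n-1)) × EuclideanSpace ℝ (Fin (n-1)),
          Real.exp (-(∫ s in r..t, lam s)) * H3kernel n sig r t p.1 p.2 *
            Ψ (X' - p.1 + (r - t) • V + t • p.2) t (V - p.2))
        = fun t => Real.exp (-(∫ s in r..t, lam s)) *
            ∫ p : EuclideanSpace ℝ (Fin (n-1)) × EuclideanSpace ℝ (Fin (n-1)),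
              H3kernel n sig r t p.1 p.2 *
                Ψ (X' - p.1 + (r - t) • V + t • p.2) t (V - p.2) := by
      intro X' V; funext t
      simp_rw [mul_assoc]
      exact MeasureTheory.integral_const_mul _ _
    have hG₁ : Integrable (fun t => Real.exp (-(∫ s in r..t, lam s)) *
        ∫ p : EuclideanSpace ℝ (Fin (n-1)) × EuclideanSpace ℝ (Fin (n-1)),
          H3kernel n sig r t p.1 p.2 *
            Ψ (X₁' - p.1 + (r - t) • V₁ + t • p.2) t (V₁ - p.2))
        (volume.restrict (Set.Ioi r)) := by
      have h := hkey₁.integral_prod_left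
      rwa [hfun X₁' V₁] at h
    have hG₂ : Integrable (fun t => Real.exp (-(∫ s in r..t, lam s)) *
        ∫ p : EuclideanSpace ℝ (Fin (n-1)) × EuclideanSpace ℝ (Fin (n-1)),
          H3kernel n sig r t p.1 p.2 *
            Ψ (X₂' - p.1 + (r - t) • V₂ + t • p.2) t (V₂ - p.2))
        (volume.restrict (Set.Ioi r)) := by
      have h := hkey₂.integral_prod_left
      rwa [hfun X₂' V₂] at h
    rw [Wsol, Wsol, ← MeasureTheory.integral_sub hG₁ hG₂]
    have hbound : ∀ t ∈ Set.Ioi r,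
        |Real.exp (-(∫ s in r..t, lam s)) *
            (∫ p : EuclideanSpace ℝ (Fin (n-1)) × EuclideanSpace ℝ (Fin (n-1)),
              H3kernel n sig r t p.1 p.2 *
                Ψ (X₁' - p.1 + (r - t) • V₁ + t • p.2) t (V₁ - p.2)) -
          Real.exp (-(∫ s in r..t, lam s)) *
            (∫ p : EuclideanSpace ℝ (Fin (n-1)) × EuclideanSpace ℝ (Fin (n-1)),
              H3kernel n sig r t p.1 p.2 *
                Ψ (X₂' - p.1 + (r - t) • V₂ + t • p.2) t (V₂ - p.2))|
        ≤ (2 * L * (1 + 2/lam₀) * d) * rexp (-(lam₀/2 * (t - r))) := by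
      intro t ht
      obtain ⟨ha, hD⟩ := abc_pos hσ₀ hsig hsiglb hr ht
      have hone : ∫ p : EuclideanSpace ℝ (Fin (n-1)) × EuclideanSpace ℝ (Fin (n-1)),
          H3kernel n sig r t p.1 p.2 = 1 := Gkernel_integral n ha hD
      have hI₁ := innerPsi_integrable n hσ₀ hsig hsiglb hΨc hM X₁' V₁ hr ht
      have hI₂ := innerPsi_integrable n hσ₀ hsig hsiglb hΨc hM X₂' V₂ hr ht
      have step1 : |(∫ p : EuclideanSpace ℝ (Fin (n-1)) × EuclideanSpace ℝ (Fin (n-1)),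
            H3kernel n sig r t p.1 p.2 *
              Ψ (X₁' - p.1 + (r - t) • V₁ + t • p.2) t (V₁ - p.2)) -
          ∫ p : EuclideanSpace ℝ (Fin (n-1)) × EuclideanSpace ℝ (Fin (n-1)),
            H3kernel n sig r t p.1 p.2 *
              Ψ (X₂' - p.1 + (r - t) • V₂ + t • p.2) t (V₂ - p.2)|
          ≤ L * (2 * (1 + (t - r)) * d) := by
        rw [← MeasureTheory.integral_sub hI₁ hI₂]
        have habs := MeasureTheory.norm_integral_le_integral_norm (μ := volume)
          (fun p : EuclideanSpace ℝ (Fin (n-1)) × EuclideanSpace ℝ (Fin (n-1)) =>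
            H3kernel n sig r t p.1 p.2 *
              Ψ (X₁' - p.1 + (r - t) • V₁ + t • p.2) t (V₁ - p.2) -
            H3kernel n sig r t p.1 p.2 *
              Ψ (X₂' - p.1 + (r - t) • V₂ + t • p.2) t (V₂ - p.2))
        rw [Real.norm_eq_abs] at habs
        refine habs.trans ?_
        have hstep : (∫ p : EuclideanSpace ℝ (Fin (n-1)) × EuclideanSpace ℝ (Fin (n-1)),
            ‖H3kernel n sig r t p.1 p.2 *
              Ψ (X₁' - p.1 + (r - t) • V₁ + t • p.2) t (V₁ - p.2) -
            H3kernel n sig r t p.1 p.2 *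
              Ψ (X₂' - p.1 + (r - t) • V₂ + t • p.2) t (V₂ - p.2)‖)
            ≤ ∫ p : EuclideanSpace ℝ (Fin (n-1)) × EuclideanSpace ℝ (Fin (n-1)),
              H3kernel n sig r t p.1 p.2 * (L * (2 * (1 + (t - r)) * d)) := by
          apply MeasureTheory.integral_mono_of_nonneg
            (Filter.Eventually.of_forall fun p => norm_nonneg _)
            ((Gkernel_integrable n ha hD).mul_const _)
          filter_upwards with p
          rw [Real.norm_eq_abs, ← mul_sub, abs_mul,
            abs_of_nonneg (H3_nonneg n sig r t p.1 p.2)]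
          apply mul_le_mul_of_nonneg_left ?_ (H3_nonneg n sig r t p.1 p.2)
          have hlip := hΨlip (X₁' - p.1 + (r - t) • V₁ + t • p.2)
            (X₂' - p.1 + (r - t) • V₂ + t • p.2) (V₁ - p.2) (V₂ - p.2) t
            (le_trans hr (le_of_lt ht))
          have e1 : (X₁' - p.1 + (r - t) • V₁ + t • p.2) -
              (X₂' - p.1 + (r - t) • V₂ + t • p.2)
              = (X₁' - X₂') + (r - t) • (V₁ - V₂) := by module
          have e2 : (V₁ - p.2) - (V₂ - p.2) = V₁ - V₂ := by abel
          rw [e1, e2] at hlip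
          refine hlip.trans ?_
          have hs := sqrt_bound (X₁' - X₂') (V₁ - V₂) (r - t) (t - r)
            (by rw [abs_of_nonpos (by simp only [Set.mem_Ioi] at ht; linarith)]; linarith)
          rw [← hddef] at hs
          exact mul_le_mul_of_nonneg_left hs hL
        refine hstep.trans ?_
        rw [MeasureTheory.integral_mul_const, hone, one_mul]
      have hexp : Real.exp (-(∫ s in r..t, lam s)) ≤ rexp (-(lam₀ * (t - r))) := by
        apply Real.exp_le_exp.mpr
        have := lam_lb hlam₀ hlamc hlamlb hr ht
        linarith
      have htr : (0:ℝ) ≤ t - r := by simp only [Set.mem_Ioi] at ht; linarith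
      rw [← mul_sub, abs_mul, abs_of_pos (Real.exp_pos _)]
      calc Real.exp (-(∫ s in r..t, lam s)) * |_| ≤
          Real.exp (-(∫ s in r..t, lam s)) * (L * (2 * (1 + (t - r)) * d)) :=
            mul_le_mul_of_nonneg_left step1 (Real.exp_pos _).le
        _ ≤ rexp (-(lam₀ * (t - r))) * (L * (2 * (1 + (t - r)) * d)) :=
            mul_le_mul_of_nonneg_right hexp (by positivity)
        _ = (2 * L * d) * ((1 + (t - r)) * rexp (-(lam₀ * (t - r)))) := by ring
        _ ≤ (2 * L * d) * ((1 + 2/lam₀) * rexp (-(lam₀/2 * (t - r)))) :=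
            mul_le_mul_of_nonneg_left (exp_decay_ineq hlam₀ htr) (by positivity)
        _ = (2 * L * (1 + 2/lam₀) * d) * rexp (-(lam₀/2 * (t - r))) := by ring
    have habs2 := MeasureTheory.norm_integral_le_integral_norm
      (μ := volume.restrict (Set.Ioi r))
      (fun t => Real.exp (-(∫ s in r..t, lam s)) *
          (∫ p : EuclideanSpace ℝ (Fin (n-1)) × EuclideanSpace ℝ (Fin (n-1)),
            H3kernel n sig r t p.1 p.2 *
              Ψ (X₁' - p.1 + (r - t) • V₁ + t • p.2) t (V₁ - p.2)) -
        Real.exp (-(∫ s in r..t, lam s)) *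
          (∫ p : EuclideanSpace ℝ (Fin (n-1)) × EuclideanSpace ℝ (Fin (n-1)),
            H3kernel n sig r t p.1 p.2 *
              Ψ (X₂' - p.1 + (r - t) • V₂ + t • p.2) t (V₂ - p.2)))
    rw [Real.norm_eq_abs] at habs2
    refine habs2.trans ?_
    have hmono : (∫ t in Set.Ioi r, ‖Real.exp (-(∫ s in r..t, lam s)) *
          (∫ p : EuclideanSpace ℝ (Fin (n-1)) × EuclideanSpace ℝ (Fin (n-1)),
            H3kernel n sig r t p.1 p.2 *
              Ψ (X₁' - p.1 + (r - t) • V₁ + t • p.2) t (V₁ - p.2)) -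
        Real.exp (-(∫ s in r..t, lam s)) *
          (∫ p : EuclideanSpace ℝ (Fin (n-1)) × EuclideanSpace ℝ (Fin (n-1)),
            H3kernel n sig r t p.1 p.2 *
              Ψ (X₂' - p.1 + (r - t) • V₂ + t • p.2) t (V₂ - p.2))‖)
        ≤ ∫ t in Set.Ioi r, (2 * L * (1 + 2/lam₀) * d) * rexp (-(lam₀/2 * (t - r))) := by
      apply MeasureTheory.integral_mono_of_nonneg
        (Filter.Eventually.of_forall fun t => norm_nonneg _)
        ((integrableOn_exp_shift (r := r) (by positivity : 0 < lam₀/2)).const_mul _)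
      filter_upwards [MeasureTheory.ae_restrict_mem measurableSet_Ioi] with t ht
      rw [Real.norm_eq_abs]
      exact hbound t ht
    refine hmono.trans ?_
    rw [MeasureTheory.integral_const_mul, integral_exp_shift (by positivity : 0 < lam₀/2)]
    have : (2 * L * (1 + 2/lam₀) * d) * (1/(lam₀/2))
        = 2 * (1 + 2/lam₀) * (2/lam₀) * L * d := by
      field_simp
    rw [this]
end
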